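/- arXiv:2602.20143 — 6 statements merged into one kernel-verified Lean document; each statement's English description precedes it below -/
import Mathlib

section
/- Let Ω be a finite set, n ≥ 1, and A ⊆ Ω^n with uniform measure μ(A) = α ∈ (0,1). Define U(A) = Ω^n \ ⋃_{j=0}^{n-1} s^j(A) × Ω^j, where s is the shift map dropping the first letter. Then μ(U(A)) ≤ (n/(n+1))^{n+1} · 1/(αn). -/
/-- Uniform measure (density) of a set of words of length `n` over alphabet `Ω`. -/
noncomputable def meas {Ω : Type*} [Fintype Ω] {n : ℕ} (S : Set (Fin n → Ω)) : ℝ :=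
  (Nat.card S : ℝ) / (Fintype.card Ω : ℝ) ^ n

/-- `covers A j` is the set `s^j(A) × Ω^j ⊆ Ω^n`: words whose first `n - j` letters
agree with the last `n - j` letters of some word of `A`. -/
def covers {Ω : Type*} {n : ℕ} (A : Set (Fin n → Ω)) (j : ℕ) : Set (Fin n → Ω) :=
  {w | ∃ a ∈ A, ∀ i : Fin n, ∀ h : (i : ℕ) + j < n, w i = a ⟨(i : ℕ) + j, h⟩}

/-- `Uset A = Ω^n \ ⋃_{j=0}^{n-1} s^j(A) × Ω^j`. -/
def Uset {Ω : Type*} {n : ℕ} (A : Set (Fin n → Ω)) : Set (Fin n → Ω) :=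
  {u | ∀ j < n, u ∉ covers A j}


set_option linter.unusedSectionVars false
set_option maxHeartbeats 1000000

private lemma geom_aux (n : ℕ) (hn : 1 ≤ n) (l : ℝ) (h0 : 0 ≤ l) (h1 : l ≤ 1) :
    (n : ℝ) * ((1 - l) * l ^ n) ≤ ((n : ℝ) / ((n:ℝ) + 1)) ^ (n + 1) := by
  have hn' : (0:ℝ) < n := by exact_mod_cast hn
  have hn1 : (0:ℝ) < (n:ℝ) + 1 := by linarith
  have hw : (n:ℝ)/((n:ℝ)+1) + 1/((n:ℝ)+1) = 1 := by field_simp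
  have h2 : (0:ℝ) ≤ (n:ℝ) * (1 - l) := by nlinarith
  have key := Real.geom_mean_le_arith_mean2_weighted
      (by positivity : (0:ℝ) ≤ (n:ℝ)/((n:ℝ)+1)) (by positivity : (0:ℝ) ≤ 1/((n:ℝ)+1)) h0 h2 hw
  have hrhs : (n:ℝ)/((n:ℝ)+1) * l + 1/((n:ℝ)+1) * ((n:ℝ)*(1-l)) = (n:ℝ)/((n:ℝ)+1) := by
    field_simp; ring
  rw [hrhs] at key
  have hbase : (0:ℝ) ≤ l ^ ((n:ℝ)/((n:ℝ)+1)) * ((n:ℝ)*(1-l)) ^ (1/((n:ℝ)+1)) := by positivity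
  have key2 := pow_le_pow_left₀ hbase key (n+1)
  have hL : (l ^ ((n:ℝ)/((n:ℝ)+1)) * ((n:ℝ)*(1-l)) ^ (1/((n:ℝ)+1))) ^ (n+1)
      = l ^ n * ((n:ℝ)*(1-l)) := by
    rw [mul_pow, ← Real.rpow_natCast (l ^ ((n:ℝ)/((n:ℝ)+1))) (n+1),
        ← Real.rpow_natCast (((n:ℝ)*(1-l)) ^ (1/((n:ℝ)+1))) (n+1),
        ← Real.rpow_mul h0, ← Real.rpow_mul h2]
    have e1 : (n:ℝ)/((n:ℝ)+1) * ((n+1 : ℕ) : ℝ) = (n:ℕ) := by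
      push_cast; field_simp
    have e2 : 1/((n:ℝ)+1) * ((n+1 : ℕ) : ℝ) = 1 := by
      push_cast; field_simp
    rw [e1, e2, Real.rpow_one, Real.rpow_natCast]
  rw [hL] at key2
  calc (n : ℝ) * ((1 - l) * l ^ n) = l ^ n * ((n:ℝ)*(1-l)) := by ring
    _ ≤ ((n:ℝ)/((n:ℝ)+1)) ^ (n+1) := key2

private lemma part2Main (n : ℕ) (hn : 1 ≤ n) (Pi δ : ℕ → ℝ) (α : ℝ)
    (hPi0 : Pi 0 = 1)
    (hdec : ∀ j, 1 ≤ j → j ≤ n → Pi j ≤ Pi (j - 1))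
    (hδ0 : ∀ j, 0 ≤ δ j)
    (hren : ∀ r, 1 ≤ r → r ≤ n →
       Pi r ≤ ∑ k ∈ Finset.range r, δ (k + 1) * Pi (r - 1 - k))
    (halpha : α ≤ Pi n) (h0 : 0 < α) :
    (n:ℝ) * (α * (1 - ∑ j ∈ Finset.range n, δ (j + 1))) ≤ ((n : ℝ) / ((n:ℝ) + 1)) ^ (n + 1) := by
  set m : ℕ → ℝ := fun r => 1 - ∑ j ∈ Finset.range r, δ (j + 1) with hm_def
  show (n:ℝ) * (α * m n) ≤ ((n : ℝ) / ((n:ℝ) + 1)) ^ (n + 1)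
  have hm0 : m 0 = 1 := by simp [hm_def]
  have hmsub : ∀ k, m k - m (k + 1) = δ (k + 1) := by
    intro k
    simp only [hm_def, Finset.sum_range_succ]
    ring
  have hmdec : ∀ ⦃a b : ℕ⦄, a ≤ b → m b ≤ m a := by
    intro a b hab
    simp only [hm_def, sub_le_sub_iff_left]
    exact Finset.sum_le_sum_of_subset_of_nonneg (Finset.range_subset_range.2 hab)
      (fun i _ _ => hδ0 (i+1))
  have hp0 : ∀ j, 1 ≤ j → j ≤ n → 0 ≤ Pi (j-1) - Pi j := by
    intro j h1 h2; have := hdec j h1 h2; linarith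
  have hp0' : ∀ j, j + 1 ≤ n → 0 ≤ Pi j - Pi (j+1) := by
    intro j hj
    have := hp0 (j+1) (by omega) hj
    simpa using this
  -- Claim A
  have claimA : ∀ r, 1 ≤ r → r ≤ n →
      m r ≤ ∑ j ∈ Finset.range r, (Pi j - Pi (j + 1)) * m (r - 1 - j) := by
    intro r hr1 hrn
    have refl2 : ∑ k ∈ Finset.range r, δ (k + 1) * Pi (r - 1 - k)
        = ∑ j ∈ Finset.range r, (m (r - 1 - j) - m (r - j)) * Pi j := by
      rw [← Finset.sum_range_reflect (fun j => (m (r - 1 - j) - m (r - j)) * Pi j) r]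
      apply Finset.sum_congr rfl
      intro k hk
      simp only [Finset.mem_range] at hk
      have e1 : r - 1 - (r - 1 - k) = k := by omega
      have e2 : r - (r - 1 - k) = k + 1 := by omega
      rw [e1, e2, hmsub k]
    have key : ∑ j ∈ Finset.range r, (Pi j - Pi (j + 1)) * m (r - 1 - j)
        = (∑ k ∈ Finset.range r, δ (k + 1) * Pi (r - 1 - k)) - Pi r + m r := by
      rw [refl2]
      have h1 : ∑ j ∈ Finset.range r, (Pi j - Pi (j + 1)) * m (r - 1 - j)
          - ∑ j ∈ Finset.range r, (m (r - 1 - j) - m (r - j)) * Pi j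
          = Pi 0 * m (r - 0) - Pi r * m (r - r) := by
        rw [← Finset.sum_sub_distrib, ← Finset.sum_range_sub' (fun j => Pi j * m (r - j)) r]
        apply Finset.sum_congr rfl
        intro j hj
        have e : r - (j+1) = r - 1 - j := by omega
        rw [e]
        ring
      simp only [Nat.sub_self, Nat.sub_zero, hm0, hPi0, one_mul, mul_one] at h1
      linarith
    rw [key]
    have := hren r hr1 hrn
    linarith
  by_cases hmn : m n ≤ 0
  · have hRnn : (0:ℝ) ≤ ((n:ℝ)/((n:ℝ)+1))^(n+1) := by positivity
    have h2 : α * m n ≤ 0 := mul_nonpos_iff.mpr (Or.inl ⟨h0.le, hmn⟩)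
    have h1 : (n:ℝ) * (α * m n) ≤ 0 :=
      mul_nonpos_iff.mpr (Or.inl ⟨Nat.cast_nonneg n, h2⟩)
    exact le_trans h1 hRnn
  push_neg at hmn
  by_cases hpz : ∀ j, 1 ≤ j → j ≤ n → Pi (j-1) - Pi j = 0
  · exfalso
    have h1 : m 1 ≤ 0 := by
      have hA := claimA 1 le_rfl hn
      rw [Finset.sum_range_one] at hA
      have hz := hpz 1 le_rfl hn
      simp only [Nat.sub_self] at hz hA ⊢
      rw [hz] at hA
      simpa using hA
    have h2 := hmdec hn
    linarith
  push_neg at hpz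
  obtain ⟨j₀, hj₀1, hj₀n, hj₀ne⟩ := hpz
  have hpj₀ : 0 < Pi (j₀-1) - Pi j₀ := lt_of_le_of_ne (hp0 j₀ hj₀1 hj₀n) (Ne.symm hj₀ne)
  set f : ℝ → ℝ := fun x => (∑ j ∈ Finset.range n, (Pi j - Pi (j+1)) * x^(n-1-j)) - x^n with hf_def
  have hf1 : f 1 = - Pi n := by
    simp only [hf_def, one_pow, mul_one]
    rw [Finset.sum_range_sub' Pi n, hPi0]
    ring
  set x₀ : ℝ := min 1 (Pi (j₀-1) - Pi j₀) with hx₀_def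
  have hx₀pos : 0 < x₀ := lt_min one_pos hpj₀
  have hx₀le1 : x₀ ≤ 1 := min_le_left _ _
  have hfx₀ : 0 ≤ f x₀ := by
    have hj₀mem : j₀ - 1 ∈ Finset.range n := by simp; omega
    have hterm := Finset.single_le_sum (f := fun j => (Pi j - Pi (j+1)) * x₀^(n-1-j))
      (fun i hi => by
        have hi' : i + 1 ≤ n := by simp at hi; omega
        exact mul_nonneg (hp0' i hi') (pow_nonneg (le_of_lt hx₀pos) _)) hj₀mem
    replace hterm : (Pi (j₀-1) - Pi ((j₀-1)+1)) * x₀^(n-1-(j₀-1))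
        ≤ ∑ j ∈ Finset.range n, (Pi j - Pi (j+1)) * x₀^(n-1-j) := hterm
    have e : j₀ - 1 + 1 = j₀ := by omega
    rw [e] at hterm
    have h1 : x₀ ^ n ≤ (Pi (j₀-1) - Pi j₀) * x₀^(n-1-(j₀-1)) := by
      have hpow : x₀ ^ n = x₀^(n-1-(j₀-1)) * x₀^(j₀) := by
        rw [← pow_add]; congr 1; omega
      have h2 : x₀^(j₀) ≤ x₀^1 := pow_le_pow_of_le_one (le_of_lt hx₀pos) hx₀le1 hj₀1
      have h3 : x₀^(n-1-(j₀-1)) * x₀^(j₀) ≤ x₀^(n-1-(j₀-1)) * x₀^1 :=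
        mul_le_mul_of_nonneg_left h2 (pow_nonneg (le_of_lt hx₀pos) _)
      have h4 : x₀^1 ≤ Pi (j₀-1) - Pi j₀ := by rw [pow_one]; exact min_le_right _ _
      have h5 : x₀^(n-1-(j₀-1)) * x₀^1 ≤ x₀^(n-1-(j₀-1)) * (Pi (j₀-1) - Pi j₀) :=
        mul_le_mul_of_nonneg_left h4 (pow_nonneg (le_of_lt hx₀pos) _)
      calc x₀ ^ n = x₀^(n-1-(j₀-1)) * x₀^(j₀) := hpow
        _ ≤ x₀^(n-1-(j₀-1)) * x₀^1 := h3
        _ ≤ x₀^(n-1-(j₀-1)) * (Pi (j₀-1) - Pi j₀) := h5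
        _ = (Pi (j₀-1) - Pi j₀) * x₀^(n-1-(j₀-1)) := mul_comm _ _
    simp only [hf_def]
    linarith
  have hcont : ContinuousOn f (Set.Icc x₀ 1) := by
    apply Continuous.continuousOn
    apply Continuous.sub
    · exact continuous_finset_sum _ (fun i _ => (continuous_const.mul (continuous_pow _)))
    · exact continuous_pow n
  have hPn : 0 < Pi n := lt_of_lt_of_le h0 halpha
  have hmem : (0:ℝ) ∈ Set.Icc (f 1) (f x₀) := by
    constructor
    · rw [hf1]; linarith
    · exact hfx₀
  obtain ⟨l, hlmem, hfl⟩ := intermediate_value_Icc' hx₀le1 hcont hmem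
  obtain ⟨hlx₀, hl1⟩ := hlmem
  have hlpos : 0 < l := lt_of_lt_of_le hx₀pos hlx₀
  have hEq : ∑ j ∈ Finset.range n, (Pi j - Pi (j+1)) * l^(n-1-j) = l^n := by
    simp only [hf_def] at hfl
    linarith [hfl]
  set C : ℕ → ℝ := fun k => ∑ j ∈ Finset.Ico (k+1) (n+1), (Pi (j-1) - Pi j) * l^(n+k-j)
    with hC_def
  have hC0' : C 0 = ∑ j ∈ Finset.Ico 1 (n+1), (Pi (j-1) - Pi j) * l^(n-j) := by
    simp only [hC_def, zero_add, Nat.add_zero]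
  have hC0 : C 0 = l^n := by
    rw [hC0', Finset.sum_Ico_eq_sum_range]
    simp only [Nat.add_sub_cancel]
    rw [← hEq]
    apply Finset.sum_congr rfl
    intro k hk
    simp only [Finset.mem_range] at hk
    have e2 : 1 + k = k + 1 := Nat.add_comm 1 k
    rw [e2]
    have e3 : n - (k+1) = n - 1 - k := by omega
    rw [e3]
    norm_num
  have hCnn : ∀ k, 0 ≤ C k := by
    intro k
    apply Finset.sum_nonneg
    intro j hj
    simp only [Finset.mem_Ico] at hj
    exact mul_nonneg (hp0 j (by omega) (by omega)) (pow_nonneg hlpos.le _)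
  have hCrec : ∀ k, 1 ≤ k → k ≤ n →
      l^n * (Pi (k-1) - Pi k) + C k = l * C (k-1) := by
    intro k hk1 hkn
    have e0 : k - 1 + 1 = k := by omega
    simp only [hC_def, e0]
    rw [Finset.sum_eq_sum_Ico_succ_bot (by omega : k < n+1), mul_add]
    congr 1
    · have e : n + (k-1) - k = n - 1 := by omega
      rw [e]
      have e4 : n - 1 + 1 = n := by omega
      have e5 : l ^ (n-1) * l = l ^ n := by rw [← pow_succ, e4]
      calc l^n * (Pi (k-1) - Pi k) = (Pi (k-1) - Pi k) * (l^(n-1) * l) := by rw [e5]; ring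
        _ = l * ((Pi (k-1) - Pi k) * l^(n-1)) := by ring
    · rw [Finset.mul_sum]
      apply Finset.sum_congr rfl
      intro j hj
      simp only [Finset.mem_Ico] at hj
      have e : n + k - j = (n + (k-1) - j) + 1 := by omega
      rw [e, pow_succ]
      ring
  set T : ℕ → ℝ := fun R => ∑ k ∈ Finset.range (R+1), C k * m (R - k) with hT_def
  have hTbound : ∀ R, R ≤ n → T R ≤ l^R * l^n := by
    intro R
    induction R with
    | zero =>
      intro _
      simp only [hT_def, zero_add, Finset.sum_range_one, Nat.sub_self, hm0, hC0, mul_one,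
        pow_zero, one_mul]
      exact le_refl _
    | succ R ih =>
      intro hRn
      have hsplit : T (R+1) = (∑ k ∈ Finset.range (R+1), C (k+1) * m (R+1 - (k+1))) + C 0 * m (R+1) :=
        Finset.sum_range_succ' (fun k => C k * m (R+1-k)) (R+1)
      have hstep : C 0 * m (R+1) ≤ l^n * ∑ j ∈ Finset.range (R+1), (Pi j - Pi (j+1)) * m (R+1-1-j) := by
        rw [hC0]
        exact mul_le_mul_of_nonneg_left (claimA (R+1) (by omega) hRn) (pow_nonneg hlpos.le n)
      have hmerge : (∑ k ∈ Finset.range (R+1), C (k+1) * m (R+1 - (k+1)))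
          + l^n * ∑ j ∈ Finset.range (R+1), (Pi j - Pi (j+1)) * m (R+1-1-j)
          = l * T R := by
        rw [Finset.mul_sum, ← Finset.sum_add_distrib]
        have hT' : l * T R = ∑ k ∈ Finset.range (R+1), l * (C k * m (R - k)) := by
          simp only [hT_def]
          rw [Finset.mul_sum]
        rw [hT']
        apply Finset.sum_congr rfl
        intro k hk
        simp only [Finset.mem_range] at hk
        have hrec := hCrec (k+1) (by omega) (by omega)
        have e5 : k + 1 - 1 = k := by omega
        rw [e5] at hrec
        have e6 : R + 1 - (k+1) = R - k := by omega
        have e7 : R + 1 - 1 - k = R - k := by omega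
        rw [e6, e7]
        linear_combination (m (R - k)) * hrec
      have : T (R+1) ≤ l * T R := by
        rw [hsplit]
        calc (∑ k ∈ Finset.range (R+1), C (k+1) * m (R+1 - (k+1))) + C 0 * m (R+1)
            ≤ (∑ k ∈ Finset.range (R+1), C (k+1) * m (R+1 - (k+1)))
              + l^n * ∑ j ∈ Finset.range (R+1), (Pi j - Pi (j+1)) * m (R+1-1-j) := by
              linarith [hstep]
          _ = l * T R := hmerge
      calc T (R+1) ≤ l * T R := this
        _ ≤ l * (l^R * l^n) := mul_le_mul_of_nonneg_left (ih (by omega)) hlpos.le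
        _ = l^(R+1) * l^n := by ring
  have hZ1 : m n * (∑ k ∈ Finset.range n, C k) ≤ T n := by
    have h1 : T n = (∑ k ∈ Finset.range n, C k * m (n - k)) + C n * m (n - n) := by
      simp only [hT_def]
      rw [Finset.sum_range_succ]
    have h2 : 0 ≤ C n * m (n - n) := by
      simp only [Nat.sub_self, hm0, mul_one]
      exact hCnn n
    have h3 : ∑ k ∈ Finset.range n, m n * C k ≤ ∑ k ∈ Finset.range n, C k * m (n - k) := by
      apply Finset.sum_le_sum
      intro k hk
      rw [mul_comm (m n) (C k)]
      exact mul_le_mul_of_nonneg_left (hmdec (Nat.sub_le n k)) (hCnn k)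
    rw [Finset.mul_sum]
    linarith
  have hZP : (1 - l) * (∑ k ∈ Finset.range n, C k) = l^n * Pi n := by
    have swap : ∑ k ∈ Finset.range n, C k
        = ∑ j ∈ Finset.Ico 1 (n+1), ∑ k ∈ Finset.range j, (Pi (j-1) - Pi j) * l^(n+k-j) := by
      simp only [hC_def]
      exact Finset.sum_comm' (by
        intro k j
        simp only [Finset.mem_Ico, Finset.mem_range]
        omega)
    rw [swap, Finset.mul_sum]
    have per : ∀ j ∈ Finset.Ico 1 (n+1),
        (1-l) * ∑ k ∈ Finset.range j, (Pi (j-1) - Pi j) * l^(n+k-j)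
        = (Pi (j-1) - Pi j) * l^(n-j) - (Pi (j-1) - Pi j) * l^n := by
      intro j hj
      simp only [Finset.mem_Ico] at hj
      have hfact : ∀ k ∈ Finset.range j, (Pi (j-1) - Pi j) * l^(n+k-j)
          = ((Pi (j-1) - Pi j) * l^(n-j)) * l^k := by
        intro k hk
        simp only [Finset.mem_range] at hk
        rw [mul_assoc, ← pow_add]
        congr 2
        omega
      rw [Finset.sum_congr rfl hfact, ← Finset.mul_sum]
      have geo : (∑ k ∈ Finset.range j, l^k) * (l - 1) = l^j - 1 := geom_sum_mul l j
      have hgeo : (1-l) * ∑ k ∈ Finset.range j, l^k = 1 - l^j := by nlinarith [geo]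
      have epow : l^(n-j) * l^j = l^n := by
        rw [← pow_add]
        congr 1
        omega
      calc (1-l) * (((Pi (j-1) - Pi j) * l^(n-j)) * ∑ k ∈ Finset.range j, l^k)
          = ((Pi (j-1) - Pi j) * l^(n-j)) * ((1-l) * ∑ k ∈ Finset.range j, l^k) := by ring
        _ = ((Pi (j-1) - Pi j) * l^(n-j)) * (1 - l^j) := by rw [hgeo]
        _ = (Pi (j-1) - Pi j) * l^(n-j) - (Pi (j-1) - Pi j) * (l^(n-j) * l^j) := by ring
        _ = (Pi (j-1) - Pi j) * l^(n-j) - (Pi (j-1) - Pi j) * l^n := by rw [epow]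
    rw [Finset.sum_congr rfl per, Finset.sum_sub_distrib]
    have hA : ∑ j ∈ Finset.Ico 1 (n+1), (Pi (j-1) - Pi j) * l^(n-j) = l^n := by
      rw [← hC0', hC0]
    have hB : ∑ j ∈ Finset.Ico 1 (n+1), (Pi (j-1) - Pi j) * l^n = (1 - Pi n) * l^n := by
      rw [← Finset.sum_mul]
      congr 1
      rw [Finset.sum_Ico_eq_sum_range]
      simp only [Nat.add_sub_cancel]
      have hcg : ∀ k ∈ Finset.range n, Pi (1+k-1) - Pi (1+k) = Pi k - Pi (k+1) := by
        intro k hk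
        have e1 : 1 + k - 1 = k := by omega
        have e2 : 1 + k = k + 1 := by omega
        rw [e1, e2]
      rw [Finset.sum_congr rfl hcg, Finset.sum_range_sub' Pi n, hPi0]
    rw [hA, hB]
    ring
  have hstep1 : l^n * (α * m n) ≤ l^n * (Pi n * m n) :=
    mul_le_mul_of_nonneg_left (mul_le_mul_of_nonneg_right halpha hmn.le)
      (pow_nonneg hlpos.le n)
  have hstep2 : l^n * (Pi n * m n) = (1-l) * (m n * ∑ k ∈ Finset.range n, C k) := by
    linear_combination (-(m n)) * hZP
  have hstep3 : (1-l) * (m n * ∑ k ∈ Finset.range n, C k) ≤ (1-l) * (l^n * l^n) := by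
    apply mul_le_mul_of_nonneg_left _ (by linarith : (0:ℝ) ≤ 1 - l)
    calc m n * ∑ k ∈ Finset.range n, C k ≤ T n := hZ1
      _ ≤ l^n * l^n := hTbound n le_rfl
  have hfin : α * m n ≤ (1-l) * l^n := by
    have h4 : l^n * (α * m n) ≤ l^n * ((1-l) * l^n) := by
      calc l^n * (α * m n) ≤ (1-l) * (l^n * l^n) := by
            rw [hstep2] at hstep1
            linarith [hstep3]
        _ = l^n * ((1-l) * l^n) := by ring
    exact le_of_mul_le_mul_left h4 (pow_pos hlpos n)
  calc (n:ℝ) * (α * m n) ≤ (n:ℝ) * ((1-l)*l^n) :=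
        mul_le_mul_of_nonneg_left hfin (Nat.cast_nonneg n)
    _ ≤ ((n:ℝ)/((n:ℝ)+1))^(n+1) := geom_aux n hn l hlpos.le hl1


open Finset

section comb

open scoped Classical

variable {Ω : Type*} [Fintype Ω] [Nonempty Ω] {n : ℕ}

private noncomputable def pre (r : ℕ) {m : ℕ} (w : Fin m → Ω) : Fin r → Ω :=
  fun i => if h : (i : ℕ) < m then w ⟨(i : ℕ), h⟩ else Classical.arbitrary Ω

private def tl (j : ℕ) {m : ℕ} (w : Fin m → Ω) : Fin (m - j) → Ω :=
  fun i => w ⟨(i : ℕ) + j, by have := i.isLt; omega⟩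

private def glue (r : ℕ) {m : ℕ} (v : Fin r → Ω) (t : Fin (m - r) → Ω) : Fin m → Ω :=
  fun i => if h : (i : ℕ) < r then v ⟨(i : ℕ), h⟩
    else t ⟨(i : ℕ) - r, by have := i.isLt; omega⟩

private noncomputable def suf (r : ℕ) (a : Fin n → Ω) : Fin r → Ω :=
  fun i => if h : (i : ℕ) + (n - r) < n then a ⟨(i : ℕ) + (n - r), h⟩ else Classical.arbitrary Ω

private lemma pre_glue {r m : ℕ} (hr : r ≤ m) (v : Fin r → Ω) (t : Fin (m - r) → Ω) :
    pre r (glue r v t) = v := by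
  funext i
  have hi : (i : ℕ) < m := lt_of_lt_of_le i.isLt hr
  simp only [pre, glue, dif_pos hi, dif_pos i.isLt, Fin.eta]

private lemma tl_glue {r m : ℕ} (v : Fin r → Ω) (t : Fin (m - r) → Ω) :
    tl r (glue r v t) = t := by
  funext i
  have h1 : ¬ ((i : ℕ) + r < r) := by omega
  simp only [tl, glue, dif_neg h1]
  congr 1
  exact Fin.ext (by simp)

private lemma glue_pre_tl {r m : ℕ} (hr : r ≤ m) (w : Fin m → Ω) :
    glue r (pre r w) (tl r w) = w := by
  funext i
  by_cases h : (i : ℕ) < r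
  · have hi : (i : ℕ) < m := lt_of_lt_of_le h hr
    simp only [glue, dif_pos h, pre, dif_pos hi, Fin.eta]
  · have h2 : (i : ℕ) - r < m - r := by have := i.isLt; omega
    simp only [glue, dif_neg h, tl]
    congr 1
    exact Fin.ext (by simp; omega)

private lemma pre_pre {i r m : ℕ} (hir : i ≤ r) (hrm : r ≤ m) (w : Fin m → Ω) :
    pre i (pre r w) = pre i w := by
  funext x
  have h1 : (x : ℕ) < r := lt_of_lt_of_le x.isLt hir
  have h2 : (x : ℕ) < m := lt_of_lt_of_le h1 hrm
  simp only [pre, dif_pos h1, dif_pos h2]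

private lemma suf_tl {j r : ℕ} (hj : j ≤ r) (hr : r ≤ n) (a : Fin n → Ω) :
    tl j (suf r a) = suf (r - j) a := by
  funext i
  have hi : (i : ℕ) < r - j := i.isLt
  have h1 : (i : ℕ) + j < r := by omega
  have h2 : ((i : ℕ) + j) + (n - r) < n := by omega
  have h3 : (i : ℕ) + (n - (r - j)) < n := by omega
  simp only [tl, suf, dif_pos h2, dif_pos h3]
  congr 1
  exact Fin.ext (by simp; omega)

private lemma suf_n_eq (a : Fin n → Ω) : suf n a = a := by
  funext i
  have h : (i : ℕ) + (n - n) < n := by have := i.isLt; omega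
  simp only [suf, dif_pos h]
  congr 1
  exact Fin.ext (by simp)

variable (A : Set (Fin n → Ω))

private noncomputable def PF (r : ℕ) : Finset (Fin r → Ω) := A.toFinset.image (suf r)

private noncomputable def DF (r : ℕ) : Finset (Fin r → Ω) :=
  (PF A r).filter (fun v => ∀ j, 1 ≤ j → j < r → pre j v ∉ PF A j)

private noncomputable def QQ (r : ℕ) : ℕ := (PF A r).card

private noncomputable def NN (r : ℕ) : ℕ := (DF A r).card

private lemma card_glue_count {r m : ℕ} (hr : r ≤ m)
    (S : Finset (Fin r → Ω)) (T : Finset (Fin (m - r) → Ω)) :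
    ((univ : Finset (Fin m → Ω)).filter (fun w => pre r w ∈ S ∧ tl r w ∈ T)).card
      = S.card * T.card := by
  rw [← Finset.card_product]
  refine Finset.card_bij' (fun w _ => (pre r w, tl r w)) (fun p _ => glue r p.1 p.2)
    (fun w hw => ?_) (fun p hp => ?_) (fun w hw => ?_) (fun p hp => ?_)
  · simp only [mem_filter, mem_univ, true_and] at hw
    simp only [Finset.mem_product]
    exact hw
  · simp only [Finset.mem_product] at hp
    simp only [mem_filter, mem_univ, true_and, pre_glue hr, tl_glue]
    exact hp
  · exact glue_pre_tl hr w
  · simp only [pre_glue hr, tl_glue]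

private lemma card_cyl {r : ℕ} (hr : r ≤ n) (S : Finset (Fin r → Ω)) :
    ((univ : Finset (Fin n → Ω)).filter (fun w => pre r w ∈ S)).card
      = S.card * (Fintype.card Ω) ^ (n - r) := by
  have h := card_glue_count (Ω := Ω) hr S (univ : Finset (Fin (n - r) → Ω))
  simp only [mem_univ, and_true] at h
  rw [h, Finset.card_univ, Fintype.card_fun, Fintype.card_fin]

private lemma QQ_one_le : QQ A 1 ≤ Fintype.card Ω := by
  have h1 : (PF A 1).card ≤ Fintype.card (Fin 1 → Ω) := Finset.card_le_univ _
  rwa [Fintype.card_fun, Fintype.card_fin, pow_one] at h1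

private lemma QQ_succ_le (r : ℕ) (hrn : r + 1 ≤ n) :
    QQ A (r + 1) ≤ Fintype.card Ω * QQ A r := by
  have h := Finset.card_le_card_of_injOn
    (f := fun v : Fin (r+1) → Ω => ((v ⟨0, by omega⟩, tl 1 v) : Ω × (Fin r → Ω)))
    (s := PF A (r+1)) (t := (univ : Finset Ω) ×ˢ PF A r) ?_ ?_
  · rwa [Finset.card_product, Finset.card_univ] at h
  · intro v hv
    simp only [PF, Finset.mem_coe, Finset.mem_image] at hv
    obtain ⟨a, ha, hva⟩ := hv
    simp only [Finset.mem_coe, Finset.mem_product, mem_univ, true_and]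
    have h2 : tl 1 v = suf r a := by
      rw [← hva]
      exact suf_tl (by omega) hrn a
    rw [h2]
    simp only [PF, Finset.mem_image]
    exact ⟨a, ha, rfl⟩
  · intro v hv v' hv' h
    simp only [Prod.mk.injEq] at h
    funext i
    by_cases h0 : (i : ℕ) = 0
    · have hie : i = ⟨0, by omega⟩ := Fin.ext h0
      rw [hie]
      exact h.1
    · have hlt : (i : ℕ) - 1 < (r + 1) - 1 := by have := i.isLt; omega
      have e1 : v i = tl 1 v ⟨(i : ℕ) - 1, hlt⟩ := by
        simp only [tl]
        congr 1
        exact Fin.ext (by simp; omega)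
      have e2 : v' i = tl 1 v' ⟨(i : ℕ) - 1, hlt⟩ := by
        simp only [tl]
        congr 1
        exact Fin.ext (by simp; omega)
      rw [e1, e2, h.2]

private lemma exists_min_bad (u : Fin n → Ω) (r : ℕ) (hr1 : 1 ≤ r) (hrn : r ≤ n)
    (hu : pre r u ∈ PF A r) :
    ∃ jm, 1 ≤ jm ∧ jm ≤ r ∧ pre jm u ∈ DF A jm := by
  classical
  set bad := (Finset.Ico 1 (r+1)).filter (fun j => pre j u ∈ PF A j) with hbad
  have hbne : bad.Nonempty := by
    refine ⟨r, ?_⟩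
    simp only [hbad, mem_filter, mem_Ico]
    exact ⟨⟨hr1, by omega⟩, hu⟩
  set jm := bad.min' hbne with hjm
  have hjm_mem : jm ∈ bad := bad.min'_mem hbne
  have hjm_min : ∀ i ∈ bad, jm ≤ i := fun i hi => bad.min'_le i hi
  simp only [hbad, mem_filter, mem_Ico] at hjm_mem
  obtain ⟨⟨hjm1, hjmr⟩, hjmP⟩ := hjm_mem
  refine ⟨jm, hjm1, by omega, ?_⟩
  simp only [DF, mem_filter]
  refine ⟨hjmP, ?_⟩
  intro i hi1 hij hcon
  have hpp : pre i (pre jm u) = pre i u := pre_pre (le_of_lt hij) (by omega) u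
  rw [hpp] at hcon
  have : i ∈ bad := by
    simp only [hbad, mem_filter, mem_Ico]
    exact ⟨⟨hi1, by omega⟩, hcon⟩
  have := hjm_min i this
  omega

private lemma renewal (r : ℕ) (hr1 : 1 ≤ r) (hrn : r ≤ n) :
    QQ A r ≤ NN A r + ∑ j ∈ Finset.Ico 1 r, NN A j * QQ A (r - j) := by
  classical
  set q := Fintype.card Ω with hq
  have hqpos : 0 < q := Fintype.card_pos
  -- cylinders
  set Ccyl : Finset (Fin n → Ω) := univ.filter (fun w => pre r w ∈ PF A r) with hC
  set Dcyl : Finset (Fin n → Ω) := univ.filter (fun w => pre r w ∈ DF A r) with hD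
  set Ecyl : ℕ → Finset (Fin n → Ω) := fun j =>
    univ.filter (fun w => pre r w ∈
      (univ.filter (fun v : Fin r → Ω => pre j v ∈ DF A j ∧ tl j v ∈ PF A (r - j)))) with hE
  have hsub : Ccyl ⊆ Dcyl ∪ (Finset.Ico 1 r).biUnion Ecyl := by
    intro w hw
    simp only [hC, mem_filter, mem_univ, true_and] at hw
    obtain ⟨jm, hjm1, hjmr, hjmD⟩ := exists_min_bad A w r hr1 hrn hw
    by_cases hjme : jm = r
    · apply Finset.mem_union_left
      simp only [hD, mem_filter, mem_univ, true_and]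
      rwa [hjme] at hjmD
    · apply Finset.mem_union_right
      apply Finset.mem_biUnion.2
      refine ⟨jm, by simp only [mem_Ico]; omega, ?_⟩
      simp only [hE, mem_filter, mem_univ, true_and]
      constructor
      · rwa [pre_pre (by omega) hrn w]
      · obtain ⟨a, ha, hsa⟩ := Finset.mem_image.1 hw
        rw [← hsa, suf_tl (by omega) hrn a]
        simp only [PF, Finset.mem_image]
        exact ⟨a, ha, rfl⟩
  have hCcard : Ccyl.card = QQ A r * q ^ (n - r) := card_cyl hrn _
  have hDcard : Dcyl.card = NN A r * q ^ (n - r) := card_cyl hrn _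
  have hEcard : ∀ j, 1 ≤ j → j < r → (Ecyl j).card = (NN A j * QQ A (r - j)) * q ^ (n - r) := by
    intro j hj1 hjr
    have h1 : (Ecyl j).card =
        (univ.filter (fun v : Fin r → Ω => pre j v ∈ DF A j ∧ tl j v ∈ PF A (r - j))).card
          * q ^ (n - r) := card_cyl hrn _
    rw [h1, card_glue_count (by omega : j ≤ r) (DF A j) (PF A (r - j))]
    rfl
  have hcard1 : Ccyl.card ≤ Dcyl.card + ∑ j ∈ Finset.Ico 1 r, (Ecyl j).card := by
    calc Ccyl.card ≤ (Dcyl ∪ (Finset.Ico 1 r).biUnion Ecyl).card := Finset.card_le_card hsub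
      _ ≤ Dcyl.card + ((Finset.Ico 1 r).biUnion Ecyl).card := Finset.card_union_le _ _
      _ ≤ Dcyl.card + ∑ j ∈ Finset.Ico 1 r, (Ecyl j).card := by
          exact Nat.add_le_add_left (Finset.card_biUnion_le) _
  rw [hCcard, hDcard] at hcard1
  have hsum : ∑ j ∈ Finset.Ico 1 r, (Ecyl j).card
      = (∑ j ∈ Finset.Ico 1 r, NN A j * QQ A (r - j)) * q ^ (n - r) := by
    rw [Finset.sum_mul]
    apply Finset.sum_congr rfl
    intro j hj
    simp only [mem_Ico] at hj
    exact hEcard j hj.1 hj.2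
  rw [hsum] at hcard1
  have hfin : QQ A r * q ^ (n - r)
      ≤ (NN A r + ∑ j ∈ Finset.Ico 1 r, NN A j * QQ A (r - j)) * q ^ (n - r) := by
    rw [add_mul]
    exact hcard1
  exact Nat.le_of_mul_le_mul_right hfin (Nat.pow_pos hqpos)

private lemma QQ_n_eq : QQ A n = A.toFinset.card := by
  have h : PF A n = A.toFinset := by
    have : A.toFinset.image (suf n) = A.toFinset.image id :=
      Finset.image_congr (fun a _ => suf_n_eq a)
    simp only [PF, this, Finset.image_id]
  simp only [QQ, h]

private lemma covers_iff (hn : 1 ≤ n) (u : Fin n → Ω) (r : ℕ) (hr1 : 1 ≤ r) (hrn : r ≤ n) :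
    u ∈ covers A (n - r) ↔ pre r u ∈ PF A r := by
  constructor
  · rintro ⟨a, haA, hcov⟩
    simp only [PF, Finset.mem_image]
    refine ⟨a, Set.mem_toFinset.2 haA, ?_⟩
    funext i
    have hi : (i : ℕ) < r := i.isLt
    have h1 : (i : ℕ) + (n - r) < n := by omega
    simp only [suf, pre, dif_pos h1, dif_pos (by omega : (i : ℕ) < n)]
    exact (hcov ⟨(i : ℕ), by omega⟩ h1).symm
  · intro h
    simp only [PF, Finset.mem_image] at h
    obtain ⟨a, ha, hsa⟩ := h
    refine ⟨a, Set.mem_toFinset.1 ha, ?_⟩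
    intro i h1
    have hi : (i : ℕ) < r := by omega
    have := congrFun hsa ⟨(i : ℕ), hi⟩
    simp only [suf, pre, dif_pos h1, dif_pos (by omega : (i : ℕ) < n)] at this
    rw [Fin.eta] at this
    exact this.symm

private lemma mem_uset_iff (hn : 1 ≤ n) (u : Fin n → Ω) :
    u ∈ Uset A ↔ ∀ r, 1 ≤ r → r ≤ n → pre r u ∉ PF A r := by
  constructor
  · intro hu r hr1 hrn
    have hj : n - r < n := by omega
    have := hu (n - r) hj
    exact fun hc => this ((covers_iff A hn u r hr1 hrn).2 hc)
  · intro h j hj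
    have e : n - (n - j) = j := by omega
    have := (covers_iff A hn u (n - j) (by omega) (by omega)).not.2
      (h (n - j) (by omega) (by omega))
    rwa [e] at this

private lemma dcyl_disjoint (hn : 1 ≤ n) {r r' : ℕ} (hr1 : 1 ≤ r) (hrr' : r < r') (hr'n : r' ≤ n) :
    Disjoint (univ.filter (fun w : Fin n → Ω => pre r w ∈ DF A r))
             (univ.filter (fun w : Fin n → Ω => pre r' w ∈ DF A r')) := by
  rw [Finset.disjoint_left]
  intro w hw hw'
  simp only [mem_filter, mem_univ, true_and] at hw hw'
  simp only [DF, mem_filter] at hw hw'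
  have h2 := hw'.2 r hr1 hrr'
  rw [pre_pre (le_of_lt hrr') hr'n w] at h2
  exact h2 hw.1

private lemma uset_card (hn : 1 ≤ n) :
    (Uset A).toFinset.card + ∑ r ∈ Finset.Ico 1 (n+1), NN A r * (Fintype.card Ω)^(n-r)
      = (Fintype.card Ω)^n := by
  classical
  set B : Finset (Fin n → Ω) := (Finset.Ico 1 (n+1)).biUnion
    (fun r => univ.filter (fun w => pre r w ∈ DF A r)) with hB
  have hUeq : (Uset A).toFinset = univ \ B := by
    ext u
    rw [Set.mem_toFinset, Finset.mem_sdiff, mem_uset_iff A hn u]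
    constructor
    · intro h
      refine ⟨mem_univ u, ?_⟩
      intro hc
      rw [hB] at hc
      obtain ⟨r, hrIco, hrf⟩ := Finset.mem_biUnion.1 hc
      simp only [mem_Ico] at hrIco
      simp only [mem_filter, mem_univ, true_and] at hrf
      simp only [DF, mem_filter] at hrf
      exact h r hrIco.1 (by omega) hrf.1
    · rintro ⟨-, h⟩ r hr1 hrn hP
      obtain ⟨jm, hjm1, hjmr, hjmD⟩ := exists_min_bad A u r hr1 hrn hP
      apply h
      rw [hB]
      apply Finset.mem_biUnion.2
      refine ⟨jm, ?_, ?_⟩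
      · simp only [mem_Ico]; omega
      · simp only [mem_filter, mem_univ, true_and]; exact hjmD
  have hcardB : B.card = ∑ r ∈ Finset.Ico 1 (n+1), NN A r * (Fintype.card Ω)^(n-r) := by
    rw [hB, Finset.card_biUnion]
    · apply Finset.sum_congr rfl
      intro r hr
      simp only [mem_Ico] at hr
      exact card_cyl (by omega) _
    · intro x hx y hy hxy
      simp only [Finset.mem_coe, mem_Ico] at hx hy
      rcases lt_or_gt_of_ne hxy with h | h
      · exact dcyl_disjoint A hn hx.1 h (by omega)
      · exact (dcyl_disjoint A hn hy.1 h (by omega)).symm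
  have hsd : (univ \ B).card + B.card = (univ : Finset (Fin n → Ω)).card :=
    Finset.card_sdiff_add_card_eq_card (Finset.subset_univ B)
  rw [hUeq, ← hcardB, hsd, Finset.card_univ, Fintype.card_fun, Fintype.card_fin]

end comb

theorem stmt0 {Ω : Type*} [Fintype Ω] [Nonempty Ω] (n : ℕ) (hn : 1 ≤ n)
    (A : Set (Fin n → Ω)) (α : ℝ) (hα : meas A = α) (h0 : 0 < α) (h1 : α < 1) :
    meas (Uset A) ≤ ((n : ℝ) / (n + 1)) ^ (n + 1) * (1 / (α * n)) := by
  classical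
  have hqpos : 0 < Fintype.card Ω := Fintype.card_pos
  set q : ℕ := Fintype.card Ω with hq
  have hq0 : (0:ℝ) < (q:ℝ) := by exact_mod_cast hqpos
  set Pi : ℕ → ℝ := fun r => if r = 0 then 1 else (QQ A r : ℝ)/(q:ℝ)^r with hPidef
  set δ : ℕ → ℝ := fun r => (NN A r : ℝ)/(q:ℝ)^r with hδdef
  have hPi0 : Pi 0 = 1 := by simp [hPidef]
  have hPipos : ∀ r, r ≠ 0 → Pi r = (QQ A r : ℝ)/(q:ℝ)^r := by
    intro r hr
    simp [hPidef, hr]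
  have hδ0 : ∀ j, 0 ≤ δ j := by
    intro j
    apply div_nonneg (Nat.cast_nonneg _)
    positivity
  have hdec : ∀ j, 1 ≤ j → j ≤ n → Pi j ≤ Pi (j-1) := by
    intro j hj1 hjn
    by_cases hj1' : j = 1
    · subst hj1'
      rw [hPipos 1 one_ne_zero]
      simp only [Nat.sub_self, hPi0]
      rw [div_le_one (by positivity)]
      have := QQ_one_le A
      have hc : (QQ A 1 : ℝ) ≤ (q : ℝ) := by exact_mod_cast this
      rwa [pow_one]
    · have hj2 : 2 ≤ j := by omega
      obtain ⟨r, rfl⟩ : ∃ r, j = r + 1 := ⟨j - 1, by omega⟩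
      have hr1 : 1 ≤ r := by omega
      rw [hPipos (r+1) (by omega), show r + 1 - 1 = r from by omega, hPipos r (by omega)]
      have hNat := QQ_succ_le A r (by omega)
      have hc : (QQ A (r+1) : ℝ) ≤ (q : ℝ) * (QQ A r : ℝ) := by exact_mod_cast hNat
      rw [div_le_div_iff₀ (by positivity) (by positivity)]
      calc (QQ A (r+1) : ℝ) * (q:ℝ)^r ≤ ((q:ℝ) * QQ A r) * (q:ℝ)^r := by
            apply mul_le_mul_of_nonneg_right hc (by positivity)
        _ = (QQ A r : ℝ) * (q:ℝ)^(r+1) := by rw [pow_succ]; ring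
  have hren : ∀ r, 1 ≤ r → r ≤ n →
      Pi r ≤ ∑ k ∈ Finset.range r, δ (k+1) * Pi (r-1-k) := by
    intro r hr1 hrn
    obtain ⟨r', rfl⟩ : ∃ r', r = r' + 1 := ⟨r - 1, by omega⟩
    have hNat := renewal A (r'+1) hr1 hrn
    have hcast : (QQ A (r'+1) : ℝ)
        ≤ (NN A (r'+1) : ℝ) + ∑ j ∈ Finset.Ico 1 (r'+1), (NN A j : ℝ) * (QQ A (r'+1-j) : ℝ) := by
      exact_mod_cast hNat
    have hdiv : (QQ A (r'+1) : ℝ)/(q:ℝ)^(r'+1)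
        ≤ ((NN A (r'+1) : ℝ) + ∑ j ∈ Finset.Ico 1 (r'+1), (NN A j : ℝ) * (QQ A (r'+1-j) : ℝ))/(q:ℝ)^(r'+1) :=
      div_le_div_of_nonneg_right hcast (by positivity)
    rw [hPipos (r'+1) (by omega)]
    refine le_trans hdiv (le_of_eq ?_)
    rw [add_div, Finset.sum_div]
    rw [Finset.sum_range_succ]
    have hlast : δ (r'+1) * Pi (r'+1-1-r') = (NN A (r'+1) : ℝ)/(q:ℝ)^(r'+1) := by
      have e : r'+1-1-r' = 0 := by omega
      rw [e, hPi0, mul_one, hδdef]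
    rw [hlast]
    rw [add_comm ((NN A (r'+1) : ℝ)/(q:ℝ)^(r'+1)) _]
    congr 1
    rw [Finset.sum_Ico_eq_sum_range]
    have e2 : r' + 1 - 1 = r' := by omega
    rw [e2]
    apply Finset.sum_congr rfl
    intro k hk
    simp only [Finset.mem_range] at hk
    have e3 : 1 + k = k + 1 := by omega
    rw [e3]
    have e4 : r' + 1 - (k+1) = r' - k := by omega
    rw [e4]
    rw [hPipos (r'-k) (by omega)]
    simp only [hδdef]
    have e6 : (q:ℝ)^(k+1) * (q:ℝ)^(r'-k) = (q:ℝ)^(r'+1) := by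
      rw [← pow_add]
      congr 1
      omega
    rw [div_mul_div_comm, e6]
  have hQn : (Nat.card ↥A : ℝ) = (QQ A n : ℝ) := by
    rw [Nat.card_coe_set_eq, Set.ncard_eq_toFinset_card', QQ_n_eq]
  have halpha : α ≤ Pi n := by
    rw [hPipos n (by omega)]
    rw [← hα]
    unfold meas
    rw [hQn]
  have key := part2Main n hn Pi δ α hPi0 hdec hδ0 hren halpha h0
  have hUmeas : meas (Uset A) = 1 - ∑ j ∈ Finset.range n, δ (j+1) := by
    have hc := uset_card A hn
    have hcast : ((Uset A).toFinset.card : ℝ)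
        + ∑ r ∈ Finset.Ico 1 (n+1), (NN A r : ℝ) * (q:ℝ)^(n-r) = (q:ℝ)^n := by
      exact_mod_cast hc
    unfold meas
    rw [Nat.card_coe_set_eq, Set.ncard_eq_toFinset_card']
    have hsum : ∑ r ∈ Finset.Ico 1 (n+1), (NN A r : ℝ) * (q:ℝ)^(n-r)
        = (∑ j ∈ Finset.range n, δ (j+1)) * (q:ℝ)^n := by
      rw [Finset.sum_mul, Finset.sum_Ico_eq_sum_range]
      have e2 : n + 1 - 1 = n := by omega
      rw [e2]
      apply Finset.sum_congr rfl
      intro k hk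
      simp only [Finset.mem_range] at hk
      have e3 : 1 + k = k + 1 := by omega
      rw [e3]
      simp only [hδdef]
      have e6 : (q:ℝ)^(k+1) * (q:ℝ)^(n-(k+1)) = (q:ℝ)^n := by
        rw [← pow_add]
        congr 1
        omega
      rw [← e6, ← mul_assoc,
        div_mul_cancel₀ _ (ne_of_gt (by positivity : (0:ℝ) < (q:ℝ)^(k+1)))]
    rw [hsum] at hcast
    have hqn : (0:ℝ) < (q:ℝ)^n := by positivity
    rw [← hq, div_eq_iff (ne_of_gt hqn)]
    linarith [hcast]
  rw [hUmeas]
  have hnR : (0:ℝ) < (n:ℝ) := by exact_mod_cast hn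
  have hαn : (0:ℝ) < α * (n:ℝ) := mul_pos h0 hnR
  rw [mul_one_div, le_div_iff₀ hαn]
  calc (1 - ∑ j ∈ Finset.range n, δ (j+1)) * (α * (n:ℝ))
      = (n:ℝ) * (α * (1 - ∑ j ∈ Finset.range n, δ (j+1))) := by ring
    _ ≤ ((n : ℝ) / ((n:ℝ) + 1)) ^ (n + 1) := key
end

section
/- Let n ≥ 1 and let γ_0, γ_1, …, γ_n and δ_1, …, δ_n be nonnegative reals satisfying: γ_0 = 1; γ_n ≤ γ_{n−1} ≤ … ≤ γ_1 ≤ 1; δ_1 + … + δ_n = 1 − α for some α ∈ (0,1); and γ_j ≤ Σ_{i=0}^{j−1} γ_i δ_{j−i} for all j = 1,…,n. Then α·γ_n ≤ (1/n)·(n/(n+1))^{n+1}. -/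
open Finset

noncomputable def zseq (γ : ℕ → ℝ) : ℕ → ℝ := fun r =>
  1 - ∑ t ∈ (Finset.range r).attach, zseq γ t * γ (r - t)
termination_by r => r
decreasing_by exact Finset.mem_range.mp t.2

lemma zseq_eq (γ : ℕ → ℝ) (r : ℕ) :
    zseq γ r = 1 - ∑ t ∈ Finset.range r, zseq γ t * γ (r - t) := by
  rw [zseq]
  rw [← Finset.sum_attach (Finset.range r) (fun t => zseq γ t * γ (r - t))]

lemma zseq_conv (γ : ℕ → ℝ) (hγ0 : γ 0 = 1) (r : ℕ) :
    ∑ t ∈ Finset.range (r + 1), zseq γ t * γ (r - t) = 1 := by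
  rw [Finset.sum_range_succ]
  simp only [Nat.sub_self, hγ0, mul_one]
  rw [zseq_eq]
  ring

lemma zseq_rec (γ : ℕ → ℝ) (hγ0 : γ 0 = 1) (r : ℕ) :
    zseq γ (r + 1) = ∑ t ∈ Finset.range (r + 1), zseq γ t * (γ (r - t) - γ (r + 1 - t)) := by
  have h1 := zseq_conv γ hγ0 r
  have h2 : zseq γ (r + 1) = 1 - ∑ t ∈ Finset.range (r + 1), zseq γ t * γ (r + 1 - t) :=
    zseq_eq γ (r + 1)
  rw [h2, ← h1, ← Finset.sum_sub_distrib]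
  apply Finset.sum_congr rfl
  intro t ht
  ring

lemma zseq_nonneg (γ : ℕ → ℝ) (n : ℕ) (hγ0 : γ 0 = 1)
    (hmono : ∀ j < n, γ (j + 1) ≤ γ j) :
    ∀ r ≤ n, 0 ≤ zseq γ r := by
  intro r
  induction r using Nat.strong_induction_on with
  | _ r ih =>
    intro hr
    match r with
    | 0 => rw [zseq_eq]; simp
    | Nat.succ s =>
      rw [zseq_rec γ hγ0 s]
      apply Finset.sum_nonneg
      intro t ht
      have ht' : t < s + 1 := Finset.mem_range.mp ht
      apply mul_nonneg
      · exact ih t (by omega) (by omega)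
      · have hst : s + 1 - t = (s - t) + 1 := by omega
        rw [hst]
        have := hmono (s - t) (by omega)
        linarith

lemma alpha_le_zseq (n : ℕ) (α : ℝ) (γ δ : ℕ → ℝ)
    (hγ0 : γ 0 = 1)
    (hδnn : ∀ i ∈ Icc 1 n, 0 ≤ δ i)
    (hmono : ∀ j < n, γ (j + 1) ≤ γ j)
    (hsum : ∑ i ∈ Icc 1 n, δ i = 1 - α)
    (hrec : ∀ j, 1 ≤ j → j ≤ n → γ j ≤ ∑ i ∈ Finset.range j, γ i * δ (j - i)) :
    ∀ m, 1 ≤ m → m ≤ n → α ≤ zseq γ m := by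
  intro m hm1 hmn
  have hzm : 1 - zseq γ m = ∑ t ∈ Finset.range m, zseq γ t * γ (m - t) := by
    rw [zseq_eq]; ring
  have hrefl : ∑ t ∈ Finset.range m, zseq γ t * γ (m - t)
      = ∑ j ∈ Finset.range m, zseq γ (m - 1 - j) * γ (j + 1) := by
    rw [← Finset.sum_range_reflect (fun t => zseq γ t * γ (m - t)) m]
    apply Finset.sum_congr rfl
    intro j hj
    have hj' : j < m := Finset.mem_range.mp hj
    have : m - (m - 1 - j) = j + 1 := by omega
    rw [this]
  have hbound : ∑ j ∈ Finset.range m, zseq γ (m - 1 - j) * γ (j + 1)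
      ≤ ∑ j ∈ Finset.range m, zseq γ (m - 1 - j)
          * (∑ i ∈ Finset.range (j + 1), γ i * δ (j + 1 - i)) := by
    apply Finset.sum_le_sum
    intro j hj
    have hj' : j < m := Finset.mem_range.mp hj
    apply mul_le_mul_of_nonneg_left
    · exact hrec (j + 1) (by omega) (by omega)
    · exact zseq_nonneg γ n hγ0 hmono (m - 1 - j) (by omega)
  have hreorder : ∑ j ∈ Finset.range m, zseq γ (m - 1 - j)
          * (∑ i ∈ Finset.range (j + 1), γ i * δ (j + 1 - i))
      = ∑ k ∈ Finset.Icc 1 m, δ k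
          * (∑ t ∈ Finset.range (m - k + 1), zseq γ t * γ (m - k - t)) := by
    simp only [Finset.mul_sum]
    rw [Finset.sum_sigma', Finset.sum_sigma']
    apply Finset.sum_nbij' (i := fun p => (⟨p.1 + 1 - p.2, m - 1 - p.1⟩ : Σ _ : ℕ, ℕ))
      (j := fun p => (⟨m - 1 - p.2, m - p.1 - p.2⟩ : Σ _ : ℕ, ℕ))
    · rintro ⟨j, i⟩ hp
      simp only [Finset.mem_sigma, Finset.mem_range] at hp
      simp only [Finset.mem_sigma, Finset.mem_Icc, Finset.mem_range]
      omega
    · rintro ⟨k, t⟩ hp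
      simp only [Finset.mem_sigma, Finset.mem_Icc, Finset.mem_range] at hp
      simp only [Finset.mem_sigma, Finset.mem_range]
      omega
    · rintro ⟨j, i⟩ hp
      simp only [Finset.mem_sigma, Finset.mem_range] at hp
      have e1 : m - 1 - (m - 1 - j) = j := by omega
      have e2 : m - (j + 1 - i) - (m - 1 - j) = i := by omega
      rw [e1, e2]
    · rintro ⟨k, t⟩ hp
      simp only [Finset.mem_sigma, Finset.mem_Icc, Finset.mem_range] at hp
      have e1 : m - 1 - t + 1 - (m - k - t) = k := by omega
      have e2 : m - 1 - (m - 1 - t) = t := by omega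
      rw [e1, e2]
    · rintro ⟨j, i⟩ hp
      simp only [Finset.mem_sigma, Finset.mem_range] at hp
      have e1 : m - (j + 1 - i) - (m - 1 - j) = i := by omega
      simp only [e1]
      ring
  have hinner : ∀ k ∈ Finset.Icc 1 m,
      δ k * (∑ t ∈ Finset.range (m - k + 1), zseq γ t * γ (m - k - t)) = δ k := by
    intro k hk
    rw [zseq_conv γ hγ0 (m - k), mul_one]
  have hsum' : ∑ k ∈ Finset.Icc 1 m, δ k ≤ 1 - α := by
    rw [← hsum]
    apply Finset.sum_le_sum_of_subset_of_nonneg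
    · exact Finset.Icc_subset_Icc_right hmn
    · intro i hi _
      exact hδnn i hi
  have : 1 - zseq γ m ≤ 1 - α := by
    rw [hzm, hrefl]
    calc _ ≤ _ := hbound
    _ = _ := hreorder
    _ = ∑ k ∈ Finset.Icc 1 m, δ k := Finset.sum_congr rfl hinner
    _ ≤ 1 - α := hsum'
  linarith

lemma conv_identity (γ : ℕ → ℝ) (hγ0 : γ 0 = 1) (n : ℕ) (x : ℝ) :
    (∑ j ∈ Finset.range (n + 1), zseq γ j * x ^ j)
      * (1 - ∑ i ∈ Finset.range n, (γ i - γ (i + 1)) * x ^ (i + 1))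
    = 1 - ∑ i ∈ Finset.range n, (γ i - γ (i + 1)) * x ^ (i + 1)
        * (∑ j ∈ Finset.Icc (n - i) n, zseq γ j * x ^ j) := by
  have hz0 : zseq γ 0 = 1 := by rw [zseq_eq]; simp
  set T := ∑ j ∈ Finset.range (n + 1), zseq γ j * x ^ j with hT
  -- T*Q = (T-1) + R
  have key : T * (∑ i ∈ Finset.range n, (γ i - γ (i + 1)) * x ^ (i + 1))
      = (T - 1) + ∑ i ∈ Finset.range n, (γ i - γ (i + 1)) * x ^ (i + 1)
          * (∑ j ∈ Finset.Icc (n - i) n, zseq γ j * x ^ j) := by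
    have step1 : T * (∑ i ∈ Finset.range n, (γ i - γ (i + 1)) * x ^ (i + 1))
        = ∑ i ∈ Finset.range n, ((γ i - γ (i + 1)) * x ^ (i + 1)
            * (∑ j ∈ Finset.range (n - i), zseq γ j * x ^ j)
          + (γ i - γ (i + 1)) * x ^ (i + 1)
            * (∑ j ∈ Finset.Icc (n - i) n, zseq γ j * x ^ j)) := by
      rw [Finset.mul_sum]
      apply Finset.sum_congr rfl
      intro i hi
      have hi' : i < n := Finset.mem_range.mp hi
      have hsplit : (∑ j ∈ Finset.range (n - i), zseq γ j * x ^ j)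
          + (∑ j ∈ Finset.Icc (n - i) n, zseq γ j * x ^ j) = T := by
        rw [hT, Finset.range_eq_Ico, Finset.range_eq_Ico, ← Finset.Ico_add_one_right_eq_Icc]
        exact Finset.sum_Ico_consecutive (fun j => zseq γ j * x ^ j) (by omega : 0 ≤ n - i) (by omega : n - i ≤ n + 1)
      rw [← hsplit]
      ring
    rw [step1, Finset.sum_add_distrib]
    congr 1
    -- ∑_i D_i x^(i+1) * ∑_{j<n-i} z_j x^j = T - 1
    have hT1 : T - 1 = ∑ r ∈ Finset.range n, zseq γ (r + 1) * x ^ (r + 1) := by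
      rw [hT, Finset.sum_range_succ']
      simp [hz0]
    rw [hT1]
    have hrec : ∀ r ∈ Finset.range n, zseq γ (r + 1) * x ^ (r + 1)
        = ∑ t ∈ Finset.range (r + 1), zseq γ t * (γ (r - t) - γ (r - t + 1)) * x ^ (r + 1) := by
      intro r _
      rw [zseq_rec γ hγ0 r, Finset.sum_mul]
      apply Finset.sum_congr rfl
      intro t ht
      have ht' : t < r + 1 := Finset.mem_range.mp ht
      have : r + 1 - t = r - t + 1 := by omega
      rw [this]
    rw [Finset.sum_congr rfl hrec]
    simp only [Finset.mul_sum]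
    rw [Finset.sum_sigma', Finset.sum_sigma']
    apply Finset.sum_nbij' (i := fun p => (⟨p.1 + p.2, p.2⟩ : Σ _ : ℕ, ℕ))
      (j := fun p => (⟨p.1 - p.2, p.2⟩ : Σ _ : ℕ, ℕ))
    · rintro ⟨i, j⟩ hp
      simp only [Finset.mem_sigma, Finset.mem_range] at hp ⊢
      omega
    · rintro ⟨r, t⟩ hp
      simp only [Finset.mem_sigma, Finset.mem_range] at hp ⊢
      omega
    · rintro ⟨i, j⟩ hp
      simp only [Finset.mem_sigma, Finset.mem_range] at hp
      have e1 : i + j - j = i := by omega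
      rw [e1]
    · rintro ⟨r, t⟩ hp
      simp only [Finset.mem_sigma, Finset.mem_range] at hp
      have e1 : r - t + t = r := by omega
      rw [e1]
    · rintro ⟨i, j⟩ hp
      simp only [Finset.mem_sigma, Finset.mem_range] at hp
      have e1 : i + j - j = i := by omega
      rw [e1]
      have e2 : x ^ (i + 1) * x ^ j = x ^ (i + j + 1) := by
        rw [← pow_add]; congr 1; omega
      calc (γ i - γ (i + 1)) * x ^ (i + 1) * (zseq γ j * x ^ j)
          = zseq γ j * (γ i - γ (i + 1)) * (x ^ (i + 1) * x ^ j) := by ring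
        _ = zseq γ j * (γ i - γ (i + 1)) * x ^ (i + j + 1) := by rw [e2]
  linarith [key]

lemma geom_Ico (x : ℝ) (a b : ℕ) (hab : a ≤ b) :
    (x - 1) * ∑ j ∈ Finset.Ico a b, x ^ j = x ^ b - x ^ a := by
  rw [Finset.sum_Ico_eq_sub _ hab, mul_sub, mul_comm (x - 1), mul_comm (x - 1),
    geom_sum_mul, geom_sum_mul]
  ring


lemma master (n : ℕ) (hn : 1 ≤ n) (α : ℝ) (γ : ℕ → ℝ) (hγ0 : γ 0 = 1)
    (hz : ∀ m, 1 ≤ m → m ≤ n → α ≤ zseq γ m)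
    (hD : ∀ i < n, 0 ≤ γ i - γ (i + 1))
    (x : ℝ) (hx : 1 < x)
    (hQ : (∑ i ∈ Finset.range n, (γ i - γ (i + 1)) * x ^ (i + 1)) ≤ 1) :
    α * γ n * x ^ (n + 1)
      ≤ (x - 1) - (1 - ∑ i ∈ Finset.range n, (γ i - γ (i + 1)) * x ^ (i + 1))
          * ((x - 1) - α * x) := by
  have hz0 : zseq γ 0 = 1 := by rw [zseq_eq]; simp
  have hx0 : (0 : ℝ) < x := by linarith
  set Q := ∑ i ∈ Finset.range n, (γ i - γ (i + 1)) * x ^ (i + 1) with hQdef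
  set T := ∑ j ∈ Finset.range (n + 1), zseq γ j * x ^ j with hTdef
  set R := ∑ i ∈ Finset.range n, (γ i - γ (i + 1)) * x ^ (i + 1)
        * (∑ j ∈ Finset.Icc (n - i) n, zseq γ j * x ^ j) with hRdef
  set S := ∑ j ∈ Finset.Icc 1 n, x ^ j with hSdef
  set Rb := ∑ i ∈ Finset.range n, (γ i - γ (i + 1)) * x ^ (i + 1)
        * (∑ j ∈ Finset.Icc (n - i) n, x ^ j) with hRbdef
  have htel : ∑ i ∈ Finset.range n, (γ i - γ (i + 1)) = 1 - γ n := by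
    rw [Finset.sum_range_sub' γ n, hγ0]
  -- R ≥ α * Rb
  have hR : α * Rb ≤ R := by
    rw [hRdef, hRbdef, Finset.mul_sum]
    apply Finset.sum_le_sum
    intro i hi
    have hi' : i < n := Finset.mem_range.mp hi
    have h1 : α * ∑ j ∈ Finset.Icc (n - i) n, x ^ j
        ≤ ∑ j ∈ Finset.Icc (n - i) n, zseq γ j * x ^ j := by
      rw [Finset.mul_sum]
      apply Finset.sum_le_sum
      intro j hj
      have hj' := Finset.mem_Icc.mp hj
      apply mul_le_mul_of_nonneg_right _ (le_of_lt (pow_pos hx0 j))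
      exact hz j (by omega) hj'.2
    have h2 : 0 ≤ (γ i - γ (i + 1)) * x ^ (i + 1) :=
      mul_nonneg (hD i hi') (le_of_lt (pow_pos hx0 (i + 1)))
    calc α * ((γ i - γ (i + 1)) * x ^ (i + 1) * ∑ j ∈ Finset.Icc (n - i) n, x ^ j)
        = (γ i - γ (i + 1)) * x ^ (i + 1) * (α * ∑ j ∈ Finset.Icc (n - i) n, x ^ j) := by ring
      _ ≤ _ := mul_le_mul_of_nonneg_left h1 h2
  -- T ≥ 1 + α * S
  have hT : 1 + α * S ≤ T := by
    have hsplit : T = zseq γ 0 * x ^ 0 + ∑ j ∈ Finset.Icc 1 n, zseq γ j * x ^ j := by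
      rw [hTdef, Finset.range_eq_Ico, ← Finset.Ico_add_one_right_eq_Icc]
      rw [← Finset.sum_Ico_consecutive (fun j => zseq γ j * x ^ j)
        (Nat.zero_le 1) (by omega : 1 ≤ n + 1)]
      congr 1
      simp
    rw [hsplit, hz0, one_mul, pow_zero, hSdef, Finset.mul_sum]
    apply add_le_add le_rfl
    apply Finset.sum_le_sum
    intro j hj
    have hj' := Finset.mem_Icc.mp hj
    exact mul_le_mul_of_nonneg_right (hz j hj'.1 hj'.2) (le_of_lt (pow_pos hx0 j))
  -- identities with (x-1)
  have hIcoIcc : ∀ a b : ℕ, Finset.Icc a b = Finset.Ico a (b + 1) := by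
    intro a b; rw [Finset.Ico_add_one_right_eq_Icc]
  have eS : (x - 1) * S = x ^ (n + 1) - x := by
    rw [hSdef, hIcoIcc, geom_Ico x 1 (n + 1) (by omega), pow_one]
  have eRb : (x - 1) * Rb = x ^ (n + 1) * Q - x ^ (n + 1) * (1 - γ n) := by
    rw [hRbdef, Finset.mul_sum]
    have : ∀ i ∈ Finset.range n,
        (x - 1) * ((γ i - γ (i + 1)) * x ^ (i + 1) * (∑ j ∈ Finset.Icc (n - i) n, x ^ j))
        = (γ i - γ (i + 1)) * x ^ (i + 1) * x ^ (n + 1) - (γ i - γ (i + 1)) * x ^ (n + 1) := by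
      intro i hi
      have hi' : i < n := Finset.mem_range.mp hi
      have e1 : (x - 1) * (∑ j ∈ Finset.Icc (n - i) n, x ^ j) = x ^ (n + 1) - x ^ (n - i) := by
        rw [hIcoIcc, geom_Ico x (n - i) (n + 1) (by omega)]
      have e2 : x ^ (i + 1) * x ^ (n - i) = x ^ (n + 1) := by
        rw [← pow_add]; congr 1; omega
      calc (x - 1) * ((γ i - γ (i + 1)) * x ^ (i + 1) * (∑ j ∈ Finset.Icc (n - i) n, x ^ j))
          = (γ i - γ (i + 1)) * x ^ (i + 1) * ((x - 1) * (∑ j ∈ Finset.Icc (n - i) n, x ^ j)) := by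
            ring
        _ = (γ i - γ (i + 1)) * x ^ (i + 1) * (x ^ (n + 1) - x ^ (n - i)) := by rw [e1]
        _ = (γ i - γ (i + 1)) * x ^ (i + 1) * x ^ (n + 1)
            - (γ i - γ (i + 1)) * (x ^ (i + 1) * x ^ (n - i)) := by ring
        _ = _ := by rw [e2]
    rw [Finset.sum_congr rfl this, Finset.sum_sub_distrib]
    have a1 : ∑ i ∈ Finset.range n, (γ i - γ (i + 1)) * x ^ (i + 1) * x ^ (n + 1)
        = (∑ i ∈ Finset.range n, (γ i - γ (i + 1)) * x ^ (i + 1)) * x ^ (n + 1) :=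
      (Finset.sum_mul _ _ _).symm
    have a2 : ∑ i ∈ Finset.range n, (γ i - γ (i + 1)) * x ^ (n + 1)
        = (∑ i ∈ Finset.range n, (γ i - γ (i + 1))) * x ^ (n + 1) :=
      (Finset.sum_mul _ _ _).symm
    rw [a1, a2, htel, ← hQdef]
    ring
  -- combine
  have hconv := conv_identity γ hγ0 n x
  rw [← hQdef, ← hTdef, ← hRdef] at hconv
  have hQ1 : 0 ≤ 1 - Q := by linarith
  have H0 : (1 + α * S) * (1 - Q) + α * Rb ≤ 1 := by
    have h1 : (1 + α * S) * (1 - Q) ≤ T * (1 - Q) :=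
      mul_le_mul_of_nonneg_right hT hQ1
    have h2 : T * (1 - Q) = 1 - R := hconv
    linarith
  have H1 : (x - 1) * ((1 + α * S) * (1 - Q) + α * Rb) ≤ (x - 1) * 1 :=
    mul_le_mul_of_nonneg_left H0 (by linarith)
  have e3 : (x - 1) * ((1 + α * S) * (1 - Q) + α * Rb)
      = (x - 1) * (1 - Q) + α * ((x - 1) * S) * (1 - Q) + α * ((x - 1) * Rb) := by ring
  rw [e3, eS, eRb] at H1
  nlinarith [H1]

lemma final_step (n : ℕ) (hn : 1 ≤ n) (x v : ℝ) (hx : 1 < x)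
    (hv : v * x ^ (n + 1) ≤ x - 1) :
    v ≤ (1 / n) * ((n : ℝ) / (n + 1)) ^ (n + 1) := by
  have hn0 : (0 : ℝ) < n := by exact_mod_cast hn
  have hn1 : (0 : ℝ) < (n : ℝ) + 1 := by linarith
  have hx0 : (0 : ℝ) < x := by linarith
  have hxp : (0 : ℝ) < x ^ (n + 1) := pow_pos hx0 _
  -- Bernoulli: (n*x/(n+1))^(n+1) ≥ n*(x-1)
  have hu : (-2 : ℝ) ≤ (n * x - (n + 1)) / (n + 1) := by
    rw [le_div_iff₀ hn1]
    nlinarith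
  have hb := one_add_mul_le_pow hu (n + 1)
  have e1 : (1 : ℝ) + ((n * x - (n + 1)) / (n + 1)) = n * x / (n + 1) := by
    field_simp
    ring
  have e2 : (1 : ℝ) + ((n : ℕ) + 1 : ℕ) * ((n * x - (n + 1)) / (n + 1)) = n * (x - 1) := by
    push_cast
    field_simp
    ring
  rw [e1] at hb
  rw [show ((((n : ℕ) + 1 : ℕ) : ℝ) = (n : ℝ) + 1) by push_cast; ring] at hb
  have hb' : (n : ℝ) * (x - 1) ≤ (n * x / (n + 1)) ^ (n + 1) := by
    have : (1 : ℝ) + ((n : ℝ) + 1) * ((n * x - (n + 1)) / (n + 1)) = n * (x - 1) := by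
      field_simp; ring
    linarith [hb, this.symm.le]
  -- so (x-1)*(n+1)^(n+1) ≤ n^n * x^(n+1)
  have key : (x - 1) * ((n : ℝ) + 1) ^ (n + 1) ≤ (n : ℝ) ^ n * x ^ (n + 1) := by
    have hexp : (n * x / (n + 1)) ^ (n + 1) = (n : ℝ) ^ (n + 1) * x ^ (n + 1) / ((n : ℝ) + 1) ^ (n + 1) := by
      rw [div_pow, mul_pow]
    rw [hexp] at hb'
    rw [le_div_iff₀ (by positivity)] at hb'
    have hpow : (n : ℝ) ^ (n + 1) = (n : ℝ) ^ n * n := pow_succ _ _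
    rw [hpow] at hb'
    -- n*(x-1)*(n+1)^(n+1) ≤ n^n * n * x^(n+1); divide by n
    nlinarith [hb', hn0, pow_pos hn0 n]
  have hrhs : (1 / (n : ℝ)) * ((n : ℝ) / (n + 1)) ^ (n + 1) = (n : ℝ) ^ n / ((n : ℝ) + 1) ^ (n + 1) := by
    rw [div_pow]
    field_simp
    rw [pow_succ]
    ring
  rw [hrhs]
  rw [le_div_iff₀ (by positivity)]
  have hv' : v ≤ (x - 1) / x ^ (n + 1) := (le_div_iff₀ hxp).mpr hv
  calc v * ((n : ℝ) + 1) ^ (n + 1)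
      ≤ ((x - 1) / x ^ (n + 1)) * ((n : ℝ) + 1) ^ (n + 1) :=
        mul_le_mul_of_nonneg_right hv' (by positivity)
      _ ≤ (n : ℝ) ^ n := by
        rw [div_mul_eq_mul_div, div_le_iff₀ hxp]
        linarith [key]

theorem stmt3 (n : ℕ) (hn : 1 ≤ n) (α : ℝ) (h0 : 0 < α) (h1 : α < 1)
    (γ δ : ℕ → ℝ)
    (hγnn : ∀ i, i ≤ n → 0 ≤ γ i)
    (hδnn : ∀ i ∈ Icc 1 n, 0 ≤ δ i)
    (hγ0 : γ 0 = 1)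
    (hmono : ∀ j < n, γ (j + 1) ≤ γ j)
    (hsum : ∑ i ∈ Icc 1 n, δ i = 1 - α)
    (hrec : ∀ j, 1 ≤ j → j ≤ n → γ j ≤ ∑ i ∈ Finset.range j, γ i * δ (j - i)) :
    α * γ n ≤ (1 / n) * ((n : ℝ) / (n + 1)) ^ (n + 1) := by
  have hn0 : (0 : ℝ) < n := by exact_mod_cast hn
  have hD : ∀ i < n, 0 ≤ γ i - γ (i + 1) := by
    intro i hi; have := hmono i hi; linarith
  have hz := alpha_le_zseq n α γ δ hγ0 hδnn hmono hsum hrec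
  -- case γ n = 0
  rcases (hγnn n le_rfl).eq_or_lt with hc | hc
  · rw [← hc, mul_zero]
    positivity
  -- define Q as a function
  set Qf : ℝ → ℝ := fun x => ∑ i ∈ Finset.range n, (γ i - γ (i + 1)) * x ^ (i + 1) with hQf
  have hQcont : Continuous Qf := by
    apply continuous_finset_sum
    intro i _
    exact (continuous_const.mul (continuous_pow (i + 1)))
  have hQ1 : Qf 1 = 1 - γ n := by
    rw [hQf]
    simp only [one_pow, mul_one]
    rw [Finset.sum_range_sub' γ n, hγ0]
  have h1α : (0 : ℝ) < 1 - α := by linarith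
  set xb : ℝ := (1 - α)⁻¹ with hxb
  have hxb1 : 1 < xb := by
    rw [hxb]
    calc (1 : ℝ) = (1 - α)⁻¹ * (1 - α) := (inv_mul_cancel₀ (ne_of_gt h1α)).symm
      _ < (1 - α)⁻¹ * 1 := by
        apply mul_lt_mul_of_pos_left (by linarith) (by positivity)
      _ = (1 - α)⁻¹ := mul_one _
  have hbracket : (xb - 1) - α * xb = 0 := by
    rw [hxb]
    field_simp
    ring
  rcases le_or_gt (Qf xb) 1 with hQle | hQgt
  · -- case A : use x = xb
    have hm := master n hn α γ hγ0 hz hD xb hxb1 hQle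
    have hrw : ∑ i ∈ Finset.range n, (γ i - γ (i + 1)) * xb ^ (i + 1) = Qf xb := rfl
    rw [hrw, hbracket, mul_zero, sub_zero] at hm
    exact final_step n hn xb (α * γ n) hxb1 hm
  · -- case B : IVT root
    have hIcc : (1 : ℝ) ∈ Set.Icc (Qf 1) (Qf xb) := by
      constructor
      · rw [hQ1]; linarith
      · exact le_of_lt hQgt
    have := intermediate_value_Icc (le_of_lt hxb1) hQcont.continuousOn hIcc
    obtain ⟨x₀, hx₀mem, hQx₀⟩ := this
    have hx₀1 : 1 < x₀ := by
      rcases hx₀mem.1.eq_or_lt with h | h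
      · exfalso; rw [← h] at hQx₀; rw [hQx₀] at hQ1; linarith
      · exact h
    have hm := master n hn α γ hγ0 hz hD x₀ hx₀1 (le_of_eq hQx₀)
    have hrw : ∑ i ∈ Finset.range n, (γ i - γ (i + 1)) * x₀ ^ (i + 1) = Qf x₀ := rfl
    rw [hrw, hQx₀, sub_self, zero_mul, sub_zero] at hm
    exact final_step n hn x₀ (α * γ n) hx₀1 hm
end

section
/- Let Ω be a finite set and S ⊆ Ω be a nonempty proper subset with |S|/|Ω| = p, and let A = Ω^{n−1} × S ⊆ Ω^n. Then U(A) = (Ω \ S)^n, and hence μ(U(A)) = (1 − p)^n = (1 − μ(A))^n. -/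
lemma card_pi_set {Ω : Type*} [Fintype Ω] {n : ℕ} (t : Fin n → Set Ω) :
    Nat.card {w : Fin n → Ω | ∀ i, w i ∈ t i} = ∏ i, Nat.card (t i) := by
  have h : {w : Fin n → Ω | ∀ i, w i ∈ t i} = Set.univ.pi t := by
    ext w; simp [Set.mem_pi]
  rw [h, Nat.card_congr (Equiv.Set.univPi t), Nat.card_pi]

theorem stmt7 {Ω : Type*} [Fintype Ω] [Nonempty Ω] (n : ℕ) (hn : 1 ≤ n)
    (S : Set Ω) (hS1 : S.Nonempty) (hS2 : S ≠ Set.univ)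
    (p : ℝ) (hp : p = (Nat.card S : ℝ) / (Fintype.card Ω : ℝ))
    (A : Set (Fin n → Ω)) (hA : A = {w | w ⟨n - 1, by omega⟩ ∈ S}) :
    Uset A = {w | ∀ i, w i ∉ S} ∧
    meas (Uset A) = (1 - p) ^ n ∧
    meas (Uset A) = (1 - meas A) ^ n := by
  have hΩ : 0 < Fintype.card Ω := Fintype.card_pos
  have hSle : Nat.card S ≤ Fintype.card Ω := by
    rw [Nat.card_coe_set_eq]
    exact le_trans (Set.ncard_le_ncard (Set.subset_univ S) (Set.finite_univ))
      (le_of_eq (by simp [Set.ncard_univ]))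
  -- Part 1
  have h1 : Uset A = {w | ∀ i, w i ∉ S} := by
    ext w
    constructor
    · intro hw i hi
      set j := n - 1 - (i : ℕ) with hj
      have hjn : j < n := by omega
      apply hw j hjn
      refine ⟨fun k => if h : j ≤ (k : ℕ) then w ⟨(k : ℕ) - j, by omega⟩ else w i, ?_, ?_⟩
      · rw [hA]
        simp only [Set.mem_setOf_eq]
        have hle : j ≤ n - 1 := by omega
        rw [dif_pos hle]
        have he : (⟨n - 1 - j, by omega⟩ : Fin n) = i := by
          ext; simp only; omega
        rw [he]; exact hi
      · intro i' h
        have hle : j ≤ (i' : ℕ) + j := Nat.le_add_left _ _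
        simp only [dif_pos hle]
        congr 1
        ext; simp only; omega
    · intro hw j hjn hc
      obtain ⟨a, ha, hagree⟩ := hc
      have hlt : n - 1 - j + j < n := by omega
      have := hagree ⟨n - 1 - j, by omega⟩ hlt
      have heq : (⟨(((⟨n - 1 - j, by omega⟩ : Fin n) : ℕ)) + j, hlt⟩ : Fin n)
          = ⟨n - 1, by omega⟩ := by ext; simp only; omega
      rw [heq] at this
      rw [hA] at ha
      simp only [Set.mem_setOf_eq] at ha
      rw [← this] at ha
      exact hw ⟨n - 1 - j, by omega⟩ ha
  -- cardinalities
  have hcompl : Nat.card (Sᶜ : Set Ω) = Fintype.card Ω - Nat.card S := by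
    have := Set.ncard_add_ncard_compl S (Set.toFinite S) (Set.toFinite Sᶜ)
    rw [Nat.card_eq_fintype_card] at this
    rw [Nat.card_coe_set_eq, Nat.card_coe_set_eq]
    omega
  have hU : Nat.card (Uset A) = (Fintype.card Ω - Nat.card S) ^ n := by
    rw [h1]
    have : {w : Fin n → Ω | ∀ i, w i ∉ S} = {w : Fin n → Ω | ∀ i, w i ∈ (fun _ : Fin n => Sᶜ) i} := by
      ext w; simp
    rw [this, card_pi_set]
    simp [hcompl]
  have hAcard : Nat.card A = Nat.card S * Fintype.card Ω ^ (n - 1) := by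
    classical
    have hA2 : A = {w : Fin n → Ω | ∀ i, w i ∈
        (fun i : Fin n => if i = ⟨n - 1, by omega⟩ then S else Set.univ) i} := by
      rw [hA]; ext w
      simp only [Set.mem_setOf_eq]
      constructor
      · intro h i
        by_cases hi : i = ⟨n - 1, by omega⟩ <;> simp [hi, h]
      · intro h
        have := h ⟨n - 1, by omega⟩
        simpa using this
    rw [hA2, card_pi_set]
    have hk : (⟨n - 1, by omega⟩ : Fin n) ∈ Finset.univ := Finset.mem_univ _
    rw [← Finset.mul_prod_erase Finset.univ _ hk, if_pos rfl]
    have hc : ∀ i ∈ Finset.univ.erase (⟨n - 1, by omega⟩ : Fin n),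
        Nat.card ↑(if i = (⟨n - 1, by omega⟩ : Fin n) then S else Set.univ) = Fintype.card Ω := by
      intro i hi
      rw [if_neg (Finset.ne_of_mem_erase hi)]
      rw [Nat.card_coe_set_eq, Set.ncard_univ, Nat.card_eq_fintype_card]
    rw [Finset.prod_congr rfl hc, Finset.prod_const,
      Finset.card_erase_of_mem hk, Finset.card_univ, Fintype.card_fin]
  have hmeasU : meas (Uset A) = (1 - p) ^ n := by
    rw [meas, hU, hp]
    push_cast [hSle]
    rw [← div_pow]
    congr 1
    have hΩ0 : (Fintype.card Ω : ℝ) ≠ 0 := by positivity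
    field_simp
  refine ⟨h1, hmeasU, ?_⟩
  rw [hmeasU]
  have hmA : meas A = p := by
    have hcast : (Fintype.card Ω : ℝ) ^ n = (Fintype.card Ω : ℝ) ^ (n - 1) * Fintype.card Ω := by
      rw [← pow_succ]
      congr 1
      omega
    rw [meas, hAcard, hp, hcast]
    push_cast
    have hΩ0 : (Fintype.card Ω : ℝ) ≠ 0 := by positivity
    have hΩ1 : (Fintype.card Ω : ℝ) ^ (n - 1) ≠ 0 := by positivity
    field_simp
  rw [hmA]
end

section
/- For any α ∈ (0,1), γ(α,2) = max{(1−α)^2, 1 − α^{1/2}}, where γ(α,n) is the supremum over all finite alphabets Ω and all A ⊆ Ω^n with μ(A) ≥ α of μ(U(A)). -/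
/-- `gammaFun α n` is the supremum, over all finite nonempty alphabets `Ω` and all
`A ⊆ Ω^n` with `μ(A) ≥ α`, of `μ(U(A))`. -/
noncomputable def gammaFun (α : ℝ) (n : ℕ) : ℝ :=
  sSup {x : ℝ | ∃ (Ω : Type) (inst : Fintype Ω) (_ : Nonempty Ω) (A : Set (Fin n → Ω)),
    α ≤ @meas Ω inst n A ∧ x = @meas Ω inst n (Uset A)}

lemma covers_zero {Ω : Type*} (A : Set (Fin 2 → Ω)) : covers A 0 = A := by
  ext w
  constructor
  · rintro ⟨a, ha, hw⟩
    have : w = a := by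
      funext i
      have := hw i (by omega)
      simpa using this.trans (congrArg a (by ext; simp))
    rwa [this]
  · intro hw
    exact ⟨w, hw, fun i h => congrArg w (by ext; simp)⟩

lemma covers_one {Ω : Type*} (A : Set (Fin 2 → Ω)) :
    covers A 1 = {w | ∃ a ∈ A, w 0 = a 1} := by
  ext w
  constructor
  · rintro ⟨a, ha, hw⟩
    refine ⟨a, ha, ?_⟩
    have := hw 0 (by norm_num)
    simpa using this.trans (congrArg a (by ext; simp))
  · rintro ⟨a, ha, hw⟩
    refine ⟨a, ha, fun i h => ?_⟩
    have hi : i = 0 := by ext; omega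
    subst hi
    exact hw.trans (congrArg a (by ext; simp))

lemma uset_two {Ω : Type*} (A : Set (Fin 2 → Ω)) :
    Uset A = (A ∪ {w | ∃ a ∈ A, w 0 = a 1})ᶜ := by
  ext w
  simp only [Uset, Set.mem_setOf_eq, Set.mem_compl_iff, Set.mem_union]
  constructor
  · intro h hc
    rcases hc with hc | hc
    · exact h 0 (by norm_num) (by rw [covers_zero]; exact hc)
    · exact h 1 (by norm_num) (by rw [covers_one]; exact hc)
  · intro h j hj
    push_neg at h
    interval_cases j
    · rw [covers_zero]; exact h.1
    · rw [covers_one]; simpa using h.2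

lemma card_pair {Ω : Type*} (P Q : Set Ω) :
    Nat.card {w : Fin 2 → Ω | w 0 ∈ P ∧ w 1 ∈ Q} = Nat.card P * Nat.card Q := by
  rw [← Nat.card_prod]
  apply Nat.card_congr
  refine ⟨fun w => (⟨w.1 0, w.2.1⟩, ⟨w.1 1, w.2.2⟩), fun p => ⟨![p.1.1, p.2.1], by simp, by simp⟩, ?_, ?_⟩
  · rintro ⟨w, hw⟩
    ext i
    fin_cases i <;> simp
  · rintro ⟨x, y⟩
    simp

lemma card_lt (m b : ℕ) (hb : b ≤ m) : Nat.card {x : Fin m | x.val < b} = b := by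
  have e : {x : Fin m | x.val < b} ≃ Fin b :=
    ⟨fun x => ⟨x.1.val, x.2⟩, fun y => ⟨⟨y.1, lt_of_lt_of_le y.2 hb⟩, y.2⟩,
      fun x => by simp, fun y => by simp⟩
  rw [Nat.card_congr e]
  simp

lemma card_ge (m b : ℕ) (hb : b ≤ m) : Nat.card {x : Fin m | b ≤ x.val} = m - b := by
  have e : {x : Fin m | b ≤ x.val} ≃ Fin (m - b) :=
    ⟨fun x => ⟨x.1.val - b, by have := x.1.2; have h2 : b ≤ x.1.val := x.2; omega⟩,
      fun y => ⟨⟨y.1 + b, by have := y.2; omega⟩, by simp⟩,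
      fun x => by
        have h2 : b ≤ x.1.val := x.2
        ext
        simp
        omega,
      fun y => by simp⟩
  rw [Nat.card_congr e]
  simp

lemma card_true {Ω : Type*} [Fintype Ω] : Nat.card {x : Ω | True} = Fintype.card Ω := by
  simp [Nat.card_eq_fintype_card, Fintype.card_congr (Equiv.Set.univ Ω)]

lemma card_fun2 {Ω : Type*} [Fintype Ω] : Nat.card (Fin 2 → Ω) = Fintype.card Ω ^ 2 := by
  simp [Nat.card_eq_fintype_card]

lemma uset_con1 (m b : ℕ) :
    Uset {w : Fin 2 → Fin m | (w 0).val < b ∧ (w 1).val < b}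
      = {w : Fin 2 → Fin m | w 0 ∈ {x : Fin m | b ≤ x.val} ∧ w 1 ∈ {x : Fin m | True}} := by
  rw [uset_two]
  have h1 : {w : Fin 2 → Fin m | ∃ a ∈ {w : Fin 2 → Fin m | (w 0).val < b ∧ (w 1).val < b}, w 0 = a 1}
      = {w : Fin 2 → Fin m | (w 0).val < b} := by
    ext w
    constructor
    · rintro ⟨a, ⟨_, ha⟩, hw⟩
      simp only [Set.mem_setOf_eq, hw]
      exact ha
    · intro hw
      exact ⟨fun _ => w 0, ⟨hw, hw⟩, rfl⟩
  rw [h1]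
  ext w
  simp only [Set.mem_compl_iff, Set.mem_union, Set.mem_setOf_eq]
  constructor
  · intro h
    push_neg at h
    exact ⟨by omega, trivial⟩
  · intro h
    push_neg
    refine ⟨fun hc => absurd h.1 (by omega), by omega⟩

-- construction 2 : A = Ω × B

lemma uset_con2 (m b : ℕ) :
    Uset {w : Fin 2 → Fin m | (w 1).val < b}
      = {w : Fin 2 → Fin m | w 0 ∈ {x : Fin m | b ≤ x.val} ∧ w 1 ∈ {x : Fin m | b ≤ x.val}} := by
  rw [uset_two]
  have h1 : {w : Fin 2 → Fin m | ∃ a ∈ {w : Fin 2 → Fin m | (w 1).val < b}, w 0 = a 1}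
      = {w : Fin 2 → Fin m | (w 0).val < b} := by
    ext w
    constructor
    · rintro ⟨a, ha, hw⟩
      simp only [Set.mem_setOf_eq, hw]
      exact ha
    · intro hw
      exact ⟨fun _ => w 0, hw, rfl⟩
  rw [h1]
  ext w
  simp only [Set.mem_compl_iff, Set.mem_union, Set.mem_setOf_eq]
  omega

lemma mem_con1 (α : ℝ) (m b : ℕ) (hm : 0 < m) (hbm : b ≤ m)
    (hα : α ≤ (b : ℝ) ^ 2 / (m : ℝ) ^ 2) :
    (((m - b : ℕ) : ℝ) / (m : ℝ)) ∈ {x : ℝ | ∃ (Ω : Type) (inst : Fintype Ω)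
      (_ : Nonempty Ω) (A : Set (Fin 2 → Ω)),
      α ≤ @meas Ω inst 2 A ∧ x = @meas Ω inst 2 (Uset A)} := by
  have hm' : (m : ℝ) ≠ 0 := Nat.cast_ne_zero.mpr hm.ne'
  refine ⟨Fin m, inferInstance, ⟨⟨0, hm⟩⟩,
    {w | (w 0).val < b ∧ (w 1).val < b}, ?_, ?_⟩
  · have h : {w : Fin 2 → Fin m | (w 0).val < b ∧ (w 1).val < b}
        = {w : Fin 2 → Fin m | w 0 ∈ {x : Fin m | x.val < b} ∧ w 1 ∈ {x : Fin m | x.val < b}} := rfl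
    rw [meas, h, card_pair, card_lt m b hbm]
    simp only [Fintype.card_fin]
    calc α ≤ (b : ℝ) ^ 2 / (m : ℝ) ^ 2 := hα
    _ = ((b * b : ℕ) : ℝ) / (m : ℝ) ^ 2 := by push_cast; ring_nf
  · rw [uset_con1, meas, card_pair, card_ge m b hbm, card_true]
    simp only [Fintype.card_fin]
    push_cast [Nat.sub_le m b]
    field_simp

lemma mem_con2 (α : ℝ) (m b : ℕ) (hm : 0 < m) (hbm : b ≤ m)
    (hα : α ≤ (b : ℝ) / (m : ℝ)) :
    (((m - b : ℕ) : ℝ) ^ 2 / (m : ℝ) ^ 2) ∈ {x : ℝ | ∃ (Ω : Type) (inst : Fintype Ω)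
      (_ : Nonempty Ω) (A : Set (Fin 2 → Ω)),
      α ≤ @meas Ω inst 2 A ∧ x = @meas Ω inst 2 (Uset A)} := by
  have hm' : (m : ℝ) ≠ 0 := Nat.cast_ne_zero.mpr hm.ne'
  refine ⟨Fin m, inferInstance, ⟨⟨0, hm⟩⟩, {w | (w 1).val < b}, ?_, ?_⟩
  · have h : {w : Fin 2 → Fin m | (w 1).val < b}
        = {w : Fin 2 → Fin m | w 0 ∈ {x : Fin m | True} ∧ w 1 ∈ {x : Fin m | x.val < b}} := by
      ext w; simp
    rw [meas, h, card_pair, card_lt m b hbm, card_true]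
    simp only [Fintype.card_fin]
    calc α ≤ (b : ℝ) / (m : ℝ) := hα
    _ = ((m * b : ℕ) : ℝ) / (m : ℝ) ^ 2 := by push_cast; field_simp
  · rw [uset_con2, meas, card_pair, card_ge m b hbm]
    simp only [Fintype.card_fin]
    push_cast [Nat.sub_le m b]
    ring

lemma arith_key (α s m b k cu cun ci : ℝ) (h0 : 0 < α) (h1 : α < 1)
    (hs2 : s ^ 2 = α) (hs0 : 0 < s) (hs1 : s < 1) (hM : 0 < m)
    (R1 : cun + cu = m ^ 2) (R2 : cun + ci = k + b * m) (R3 : ci ≤ b * b)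
    (R4 : k ≤ m * b) (R5 : b ≤ m) (Rcik : ci ≤ k) (hαk : α * m ^ 2 ≤ k) :
    cu / m ^ 2 ≤ max ((1 - α) ^ 2) (1 - s) := by
  have hM2 : (0 : ℝ) < m ^ 2 := by positivity
  have hsα : α ≤ s := by nlinarith
  have hαm : α * m ≤ b := by nlinarith
  rcases le_or_gt (s * m) b with h | h
  · refine le_trans ?_ (le_max_right _ _)
    rw [div_le_iff₀ hM2]
    have h1' : cu ≤ m ^ 2 - b * m := by linarith
    nlinarith [mul_le_mul_of_nonneg_right h hM.le]
  · have hcub : cu ≤ m ^ 2 - α * m ^ 2 - b * m + b * b := by linarith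
    rcases le_or_gt b ((1 - α) * m) with h2 | h2
    · refine le_trans ?_ (le_max_left _ _)
      rw [div_le_iff₀ hM2]
      nlinarith [mul_nonneg (sub_nonneg.mpr hαm) (sub_nonneg.mpr h2)]
    · refine le_trans ?_ (le_max_right _ _)
      rw [div_le_iff₀ hM2]
      have hy : 0 ≤ b - (1 - s) * m := by nlinarith
      nlinarith [mul_nonpos_of_nonpos_of_nonneg (by linarith : b - s * m ≤ 0) hy]

lemma upper (α : ℝ) (h0 : 0 < α) (h1 : α < 1) (Ω : Type) [Fintype Ω] [Nonempty Ω]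
    (A : Set (Fin 2 → Ω)) (hα : α ≤ meas A) :
    meas (Uset A) ≤ max ((1 - α) ^ 2) (1 - Real.sqrt α) := by
  classical
  set m := Fintype.card Ω with hm_def
  have hm : 0 < m := Fintype.card_pos
  set B : Set Ω := (fun a => a 1) '' A with hB
  set Bfst : Set (Fin 2 → Ω) := {w | w 0 ∈ B} with hBfst
  have hcov1 : {w : Fin 2 → Ω | ∃ a ∈ A, w 0 = a 1} = Bfst := by
    ext w
    simp only [hBfst, hB, Set.mem_setOf_eq, Set.mem_image]
    exact ⟨fun ⟨a, ha, hw⟩ => ⟨a, ha, hw.symm⟩, fun ⟨a, ha, hw⟩ => ⟨a, ha, hw.symm⟩⟩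
  have hU : Uset A = (A ∪ Bfst)ᶜ := by rw [uset_two, hcov1]
  -- cardinalities
  set k := A.ncard
  set b := B.ncard
  set cu := (Uset A).ncard
  set cun := (A ∪ Bfst).ncard
  set ci := (A ∩ Bfst).ncard
  have hcu_compl : cun + cu = m ^ 2 := by
    have hcompl := Set.ncard_add_ncard_compl (A ∪ Bfst) (Set.toFinite _) (Set.toFinite _)
    rwa [← hU, card_fun2] at hcompl
  have hBfst_card : Bfst.ncard = b * m := by
    have h : Bfst = {w : Fin 2 → Ω | w 0 ∈ B ∧ w 1 ∈ {x : Ω | True}} := by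
      ext w; simp [hBfst]
    rw [h, ← Nat.card_coe_set_eq, card_pair, card_true, Nat.card_coe_set_eq]
  have hie : cun + ci = k + b * m := by
    rw [← hBfst_card]; exact Set.ncard_union_add_ncard_inter A Bfst
  have hpairBB : ({w : Fin 2 → Ω | w 0 ∈ B ∧ w 1 ∈ B}).ncard = b * b := by
    rw [← Nat.card_coe_set_eq, card_pair, Nat.card_coe_set_eq]
  have hci : ci ≤ b * b := by
    rw [← hpairBB]
    apply Set.ncard_le_ncard _ (Set.toFinite _)
    rintro w ⟨hwA, hwB⟩
    exact ⟨hwB, ⟨w, hwA, rfl⟩⟩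
  have hcik : ci ≤ k := Set.ncard_le_ncard Set.inter_subset_left (Set.toFinite _)
  have hk : k ≤ m * b := by
    have h : ({w : Fin 2 → Ω | w 0 ∈ {x : Ω | True} ∧ w 1 ∈ B}).ncard = m * b := by
      rw [← Nat.card_coe_set_eq, card_pair, card_true, Nat.card_coe_set_eq]
    rw [← h]
    apply Set.ncard_le_ncard _ (Set.toFinite _)
    intro w hw
    exact ⟨trivial, ⟨w, hw, rfl⟩⟩
  have hb : b ≤ m := by
    have := Set.ncard_le_ncard (Set.subset_univ B) (Set.toFinite _)
    rwa [Set.ncard_univ, Nat.card_eq_fintype_card] at this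
  -- to reals
  have hmeasU : meas (Uset A) = (cu : ℝ) / (m : ℝ) ^ 2 := by
    rw [meas, Nat.card_coe_set_eq]
  have hmeasA : meas A = (k : ℝ) / (m : ℝ) ^ 2 := by
    rw [meas, Nat.card_coe_set_eq]
  rw [hmeasU]
  have hM : (0 : ℝ) < (m : ℝ) := Nat.cast_pos.mpr hm
  have hM2 : (0 : ℝ) < (m : ℝ) ^ 2 := by positivity
  have hαk : α * (m : ℝ) ^ 2 ≤ (k : ℝ) := by
    rw [hmeasA, le_div_iff₀ hM2] at hα; linarith
  exact arith_key α (Real.sqrt α) (m : ℝ) (b : ℝ) (k : ℝ) (cu : ℝ) (cun : ℝ) (ci : ℝ)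
    h0 h1 (Real.sq_sqrt h0.le) (Real.sqrt_pos.mpr h0)
    (by rw [show (1:ℝ) = Real.sqrt 1 by simp]; exact Real.sqrt_lt_sqrt h0.le h1)
    hM (by exact_mod_cast hcu_compl) (by exact_mod_cast hie) (by exact_mod_cast hci)
    (by exact_mod_cast hk) (by exact_mod_cast hb) (by exact_mod_cast hcik) hαk

theorem stmt9 (α : ℝ) (h0 : 0 < α) (h1 : α < 1) :
    gammaFun α 2 = max ((1 - α) ^ 2) (1 - Real.sqrt α) := by
  have hs0 : 0 < Real.sqrt α := Real.sqrt_pos.mpr h0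
  have hs1 : Real.sqrt α < 1 := by
    rw [show (1:ℝ) = Real.sqrt 1 by simp]
    exact Real.sqrt_lt_sqrt h0.le h1
  have hs2 : Real.sqrt α ^ 2 = α := Real.sq_sqrt h0.le
  rw [gammaFun]
  apply csSup_eq_of_forall_le_of_forall_lt_exists_gt
  · -- nonempty
    refine ⟨_, mem_con2 α 1 1 one_pos le_rfl ?_⟩
    norm_num
    exact h1.le
  · -- upper bound
    rintro x ⟨Ω, inst, ne, A, hA, rfl⟩
    exact upper α h0 h1 Ω A hA
  · -- approximation
    intro w hw
    rcases le_or_gt (1 - Real.sqrt α) ((1 - α) ^ 2) with hc | hc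
    · -- max = (1-α)^2 : use construction 2
      rw [max_eq_left hc] at hw
      obtain ⟨m, hm⟩ := exists_nat_gt (max (2 / ((1 - α) ^ 2 - w)) (1 / (1 - α)))
      have h1α : (0:ℝ) < 1 - α := by linarith
      have hgap : (0:ℝ) < (1 - α) ^ 2 - w := by linarith
      have hm1 : 1 / (1 - α) < (m:ℝ) := lt_of_le_of_lt (le_max_right _ _) hm
      have hm2 : 2 / ((1 - α) ^ 2 - w) < (m:ℝ) := lt_of_le_of_lt (le_max_left _ _) hm
      have hM : (0:ℝ) < (m:ℝ) := lt_trans (by positivity) hm1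
      have hm0 : 0 < m := by exact_mod_cast hM
      have hα1m : 1 < (1 - α) * (m:ℝ) := by
        rw [div_lt_iff₀ h1α] at hm1; linarith
      set b := ⌈α * (m:ℝ)⌉₊ with hb_def
      have hb_le : (b:ℝ) < α * (m:ℝ) + 1 :=
        Nat.ceil_lt_add_one (by positivity)
      have hb_ge : α * (m:ℝ) ≤ (b:ℝ) := Nat.le_ceil _
      have hbm : b ≤ m := by
        have : (b:ℝ) ≤ (m:ℝ) := by nlinarith
        exact_mod_cast this
      have hd : ((m - b : ℕ):ℝ) = (m:ℝ) - (b:ℝ) := by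
        push_cast [hbm]; ring
      refine ⟨_, mem_con2 α m b hm0 hbm ?_, ?_⟩
      · rw [le_div_iff₀ hM]; linarith
      · rw [hd]
        rw [lt_div_iff₀ (by positivity)]
        have hd0 : (0:ℝ) ≤ (m:ℝ) - (b:ℝ) - ((1 - α) * m - 1 - ((m:ℝ) - (b:ℝ))) := by nlinarith
        have hdge : (1 - α) * (m:ℝ) - 1 ≤ (m:ℝ) - (b:ℝ) := by nlinarith
        have hdpos : (0:ℝ) ≤ (1 - α) * (m:ℝ) - 1 := by linarith
        have h2m : 2 < ((1 - α) ^ 2 - w) * (m:ℝ) := by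
          rw [div_lt_iff₀ hgap] at hm2; linarith
        nlinarith [sq_nonneg ((m:ℝ) - (b:ℝ)), mul_le_mul hdge hdge hdpos (by linarith)]
    · -- max = 1 - sqrt α : use construction 1
      rw [max_eq_right hc.le] at hw
      set s := Real.sqrt α
      obtain ⟨m, hm⟩ := exists_nat_gt (max (1 / (1 - s - w)) (1 / (1 - s)))
      have h1s : (0:ℝ) < 1 - s := by linarith
      have hgap : (0:ℝ) < 1 - s - w := by linarith
      have hm1 : 1 / (1 - s) < (m:ℝ) := lt_of_le_of_lt (le_max_right _ _) hm
      have hm2 : 1 / (1 - s - w) < (m:ℝ) := lt_of_le_of_lt (le_max_left _ _) hm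
      have hM : (0:ℝ) < (m:ℝ) := lt_trans (by positivity) hm1
      have hm0 : 0 < m := by exact_mod_cast hM
      have hs1m : 1 < (1 - s) * (m:ℝ) := by
        rw [div_lt_iff₀ h1s] at hm1; linarith
      set b := ⌈s * (m:ℝ)⌉₊ with hb_def
      have hb_le : (b:ℝ) < s * (m:ℝ) + 1 := Nat.ceil_lt_add_one (by positivity)
      have hb_ge : s * (m:ℝ) ≤ (b:ℝ) := Nat.le_ceil _
      have hbm : b ≤ m := by
        have : (b:ℝ) ≤ (m:ℝ) := by nlinarith
        exact_mod_cast this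
      have hd : ((m - b : ℕ):ℝ) = (m:ℝ) - (b:ℝ) := by
        push_cast [hbm]; ring
      refine ⟨_, mem_con1 α m b hm0 hbm ?_, ?_⟩
      · rw [le_div_iff₀ (by positivity)]
        have hq : s * (m:ℝ) * (s * (m:ℝ)) ≤ (b:ℝ) * (b:ℝ) :=
          mul_le_mul hb_ge hb_ge (by positivity) (Nat.cast_nonneg b)
        have he1 : α * (m:ℝ) ^ 2 = s * (m:ℝ) * (s * (m:ℝ)) := by rw [← hs2]; ring
        have he2 : (b:ℝ) * (b:ℝ) = (b:ℝ) ^ 2 := by ring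
        linarith [hq]
      · rw [hd, lt_div_iff₀ hM]
        have h2m : 1 < (1 - s - w) * (m:ℝ) := by
          rw [div_lt_iff₀ hgap] at hm2; linarith
        linarith [h2m, hb_le]
end

section
/- Let A ⊆ Ω^n have measure α ∈ (0,1). For w ∈ Ω^n let f(w) be the number of indices j ∈ {0,…,n−1} with w ∈ s^j(A) × Ω^j. Then for every integer t with 1 ≤ t ≤ n/4, μ({w ∈ Ω^n : f(w) ≤ t}) ≤ 4t/(αn). -/
namespace Stmt15Aux

variable {Ω : Type*} [Fintype Ω] [Nonempty Ω]

/-- Total version of a word: out-of-range indices get a junk value. -/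
noncomputable def tot {M : ℕ} (x : Fin M → Ω) (i : ℕ) : Ω :=
  if h : i < M then x ⟨i, h⟩ else Classical.arbitrary Ω

lemma tot_lt {M : ℕ} (x : Fin M → Ω) {i : ℕ} (h : i < M) : tot x i = x ⟨i, h⟩ := dif_pos h

lemma fin_congr {N : ℕ} (x : Fin N → Ω) {a b : ℕ} (hab : a = b) (ha : a < N) (hb : b < N) :
    x ⟨a, ha⟩ = x ⟨b, hb⟩ := by subst hab; rfl

/-- Concatenation of two words of length `N`. -/
def catW {N : ℕ} (y x : Fin N → Ω) : Fin (2*N) → Ω :=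
  fun q => if h : (q : ℕ) < N then y ⟨(q : ℕ), h⟩
    else x ⟨(q : ℕ) - N, by have := q.isLt; omega⟩

lemma catW_left {N : ℕ} (y x : Fin N → Ω) {q : ℕ} (hq : q < N) (hq2 : q < 2*N) :
    catW y x ⟨q, hq2⟩ = y ⟨q, hq⟩ := dif_pos hq

lemma catW_right {N : ℕ} (y x : Fin N → Ω) {q : ℕ} (hq : ¬ q < N) (hq2 : q < 2*N) :
    catW y x ⟨q, hq2⟩ = x ⟨q - N, by omega⟩ := dif_neg hq

/-- Place a word of length `2*N` at position `s` inside a word of length `3*N`,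
filling the remaining `N` positions with `ξ`. -/
def placeW {N : ℕ} (s : ℕ) (hs : s ≤ N) (z : Fin (2*N) → Ω) (ξ : Fin N → Ω) :
    Fin (3*N) → Ω :=
  fun p => if h1 : (p : ℕ) < s then ξ ⟨(p : ℕ), by omega⟩
    else if h2 : (p : ℕ) < s + 2*N then z ⟨(p : ℕ) - s, by omega⟩
    else ξ ⟨(p : ℕ) - 2*N, by have := p.isLt; omega⟩

lemma placeW_left {N : ℕ} (s : ℕ) (hs : s ≤ N) (z : Fin (2*N) → Ω) (ξ : Fin N → Ω)
    {p : ℕ} (h1 : p < s) (hp : p < 3*N) :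
    placeW s hs z ξ ⟨p, hp⟩ = ξ ⟨p, by omega⟩ := dif_pos h1

lemma placeW_mid {N : ℕ} (s : ℕ) (hs : s ≤ N) (z : Fin (2*N) → Ω) (ξ : Fin N → Ω)
    {p : ℕ} (h1 : ¬ p < s) (h2 : p < s + 2*N) (hp : p < 3*N) :
    placeW s hs z ξ ⟨p, hp⟩ = z ⟨p - s, by omega⟩ := (dif_neg h1).trans (dif_pos h2)

lemma placeW_right {N : ℕ} (s : ℕ) (hs : s ≤ N) (z : Fin (2*N) → Ω) (ξ : Fin N → Ω)
    {p : ℕ} (h1 : ¬ p < s) (h2 : ¬ p < s + 2*N) (hp : p < 3*N) :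
    placeW s hs z ξ ⟨p, hp⟩ = ξ ⟨p - 2*N, by omega⟩ := (dif_neg h1).trans (dif_neg h2)

/-- Pad a word of length `L` to length `M`. -/
def padW {L M : ℕ} (h : L ≤ M) (w : Fin L → Ω) (ξ : Fin (M - L) → Ω) : Fin M → Ω :=
  fun p => if hp : (p : ℕ) < L then w ⟨(p : ℕ), hp⟩
    else ξ ⟨(p : ℕ) - L, by have := p.isLt; omega⟩

lemma padW_left {L M : ℕ} (h : L ≤ M) (w : Fin L → Ω) (ξ : Fin (M - L) → Ω)
    {p : ℕ} (h1 : p < L) (hp : p < M) :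
    padW h w ξ ⟨p, hp⟩ = w ⟨p, h1⟩ := dif_pos h1

lemma padW_right {L M : ℕ} (h : L ≤ M) (w : Fin L → Ω) (ξ : Fin (M - L) → Ω)
    {p : ℕ} (h1 : ¬ p < L) (hp : p < M) :
    padW h w ξ ⟨p, hp⟩ = ξ ⟨p - L, by omega⟩ := dif_neg h1

/-- Extract `L` letters starting at position `s`. -/
def strunc {n : ℕ} (s L : ℕ) (h : s + L ≤ n) (a : Fin n → Ω) : Fin L → Ω :=
  fun i => a ⟨s + (i : ℕ), by have := i.isLt; omega⟩

lemma strunc_apply {n : ℕ} (s L : ℕ) (h : s + L ≤ n) (a : Fin n → Ω) (i : Fin L) :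
    strunc s L h a i = a ⟨s + (i : ℕ), by have := i.isLt; omega⟩ := rfl

lemma card_words (k : ℕ) : Nat.card (Fin k → Ω) = Fintype.card Ω ^ k := by
  simp [Nat.card_eq_fintype_card]

lemma card_aux {N1 N2 d1 d2 : ℕ} (S : Set (Fin N1 → Ω)) (T : Set (Fin N2 → Ω))
    (f1 : (Fin N1 → Ω) → (Fin d1 → Ω) → (Fin N2 → Ω))
    (f2 : (Fin N1 → Ω) → (Fin d1 → Ω) → (Fin d2 → Ω))
    (hmem : ∀ s ∈ S, ∀ ξ, f1 s ξ ∈ T)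
    (hinj : ∀ s ∈ S, ∀ s' ∈ S, ∀ ξ ξ', f1 s ξ = f1 s' ξ' → f2 s ξ = f2 s' ξ' →
      s = s' ∧ ξ = ξ') :
    Nat.card S * (Fintype.card Ω)^d1 ≤ Nat.card T * (Fintype.card Ω)^d2 := by
  rw [← card_words (Ω := Ω) d1, ← card_words (Ω := Ω) d2, ← Nat.card_prod, ← Nat.card_prod]
  have hI : Function.Injective (fun p : ↥S × (Fin d1 → Ω) =>
      ((⟨f1 p.1.1 p.2, hmem p.1.1 p.1.2 p.2⟩ : ↥T), f2 p.1.1 p.2)) := by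
    rintro ⟨⟨s, hs⟩, ξ⟩ ⟨⟨s', hs'⟩, ξ'⟩ h
    rw [Prod.mk.injEq, Subtype.mk.injEq] at h
    obtain ⟨h1, h2⟩ := hinj s hs s' hs' ξ ξ' h.1 h.2
    simp only [Prod.mk.injEq, Subtype.mk.injEq]
    exact ⟨h1, h2⟩
  exact Nat.card_le_card_of_injective _ hI

lemma card_aux2 {N1 N2 N3 : ℕ} (S : Set (Fin N1 → Ω)) (T : Set (Fin N2 → Ω))
    (R : Set (Fin N3 → Ω))
    (f : (Fin N1 → Ω) → (Fin N2 → Ω) → (Fin N3 → Ω))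
    (hmem : ∀ s ∈ S, ∀ u ∈ T, f s u ∈ R)
    (hinj : ∀ s ∈ S, ∀ s' ∈ S, ∀ u ∈ T, ∀ u' ∈ T, f s u = f s' u' → s = s' ∧ u = u') :
    Nat.card S * Nat.card T ≤ Nat.card R := by
  rw [← Nat.card_prod]
  have hI : Function.Injective (fun p : ↥S × ↥T =>
      (⟨f p.1.1 p.2.1, hmem p.1.1 p.1.2 p.2.1 p.2.2⟩ : ↥R)) := by
    rintro ⟨⟨s, hs⟩, ⟨u, hu⟩⟩ ⟨⟨s', hs'⟩, ⟨u', hu'⟩⟩ h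
    rw [Subtype.mk.injEq] at h
    obtain ⟨h1, h2⟩ := hinj s hs s' hs' u hu u' hu' h
    simp only [Prod.mk.injEq, Subtype.mk.injEq]
    exact ⟨h1, h2⟩
  exact Nat.card_le_card_of_injective _ hI

/-- `Zset b m V ⊆ Ω^{2bm}`: words whose initial window lies in `V` and whose windows at
positions `b*k`, `1 ≤ k ≤ m`, avoid `V`. -/
def Zset (b m : ℕ) (V : Set (Fin (b*m) → Ω)) : Set (Fin (2*(b*m)) → Ω) :=
  {z | (fun i : Fin (b*m) => tot z (i : ℕ)) ∈ V ∧
       ∀ k, 1 ≤ k → k ≤ m → (fun i : Fin (b*m) => tot z (b*k + (i : ℕ))) ∉ V}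

def Fset (b m : ℕ) (V : Set (Fin (b*m) → Ω)) (i : ℕ) : Set (Fin (3*(b*m)) → Ω) :=
  {x | (fun ℓ : Fin (2*(b*m)) => tot x (b*i + (ℓ : ℕ))) ∈ Zset b m V}

lemma ML1 (b m : ℕ) (V : Set (Fin (b*m) → Ω)) :
    Nat.card V * Nat.card {x : Fin (b*m) → Ω | ∀ j' < m, x ∉ covers V (b*j')}
      ≤ Nat.card (Zset b m V) := by
  apply card_aux2 _ _ _ catW
  · intro y hy x hx
    constructor
    · have he : (fun i : Fin (b*m) => tot (catW y x) (i : ℕ)) = y := by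
        funext i
        have h2 : (i : ℕ) < 2*(b*m) := by have := i.isLt; omega
        rw [tot_lt _ h2, catW_left y x i.isLt h2]
      rw [he]; exact hy
    · intro k hk1 hk2 hmem
      refine hx (m - k) (by omega) ⟨_, hmem, ?_⟩
      intro i hi
      show x i = tot (catW y x) (b*k + ((i : ℕ) + b*(m-k)))
      have hsum : b*k + b*(m-k) = b*m := by rw [← Nat.mul_add]; congr 1; omega
      have harg : b*k + ((i : ℕ) + b*(m-k)) = (i : ℕ) + b*m := by omega
      have hlt : (i : ℕ) + b*m < 2*(b*m) := by have := i.isLt; omega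
      rw [harg, tot_lt _ hlt, catW_right y x (by omega) hlt]
      exact (fin_congr x (by omega) _ i.isLt).symm
  · intro y hy y' hy' x hx x' hx' h
    constructor
    · funext i
      have h2 : (i : ℕ) < 2*(b*m) := by have := i.isLt; omega
      have h3 := congrFun h ⟨(i : ℕ), h2⟩
      rw [catW_left y x i.isLt h2, catW_left y' x' i.isLt h2] at h3
      exact h3
    · funext i
      have h2 : (i : ℕ) + b*m < 2*(b*m) := by have := i.isLt; omega
      have h3 := congrFun h ⟨(i : ℕ) + b*m, h2⟩
      rw [catW_right y x (by omega) h2, catW_right y' x' (by omega) h2] at h3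
      have e1 := fin_congr x (show (i : ℕ) + b*m - b*m = (i : ℕ) by omega)
        (by have := i.isLt; omega) i.isLt
      have e2 := fin_congr x' (show (i : ℕ) + b*m - b*m = (i : ℕ) by omega)
        (by have := i.isLt; omega) i.isLt
      exact e1.symm.trans (h3.trans e2)

lemma ML2 (b m : ℕ) (V : Set (Fin (b*m) → Ω)) :
    (m+1) * (Nat.card (Zset b m V) * (Fintype.card Ω)^(b*m))
      ≤ (Fintype.card Ω)^(3*(b*m)) := by
  classical
  have hwin : ∀ (s : ℕ) (hs : s ≤ b*m) (z : Fin (2*(b*m)) → Ω) (ξ : Fin (b*m) → Ω),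
      (fun ℓ : Fin (2*(b*m)) => tot (placeW s hs z ξ) (s + (ℓ : ℕ))) = z := by
    intro s hs z ξ
    funext ℓ
    have h3 : s + (ℓ : ℕ) < 3*(b*m) := by have := ℓ.isLt; omega
    rw [tot_lt _ h3, placeW_mid s hs z ξ (by omega) (by have := ℓ.isLt; omega) h3]
    exact fin_congr z (by omega) _ ℓ.isLt
  have key : ∀ i, i ≤ m → Nat.card (Zset b m V) * (Fintype.card Ω)^(b*m)
      ≤ Nat.card (Fset b m V i) := by
    intro i hi
    have hs : b*i ≤ b*m := Nat.mul_le_mul_left b hi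
    have h1 := card_aux (Ω := Ω) (d1 := b*m) (d2 := 0) (Zset b m V) (Fset b m V i)
      (placeW (b*i) hs) (fun _ _ => (fun j : Fin 0 => j.elim0))
      ?_ ?_
    · simpa using h1
    · intro z hz ξ
      show (fun ℓ : Fin (2*(b*m)) => tot (placeW (b*i) hs z ξ) (b*i + (ℓ : ℕ))) ∈ Zset b m V
      rw [hwin (b*i) hs z ξ]; exact hz
    · intro z hz z' hz' ξ ξ' hf _
      constructor
      · rw [← hwin (b*i) hs z ξ, ← hwin (b*i) hs z' ξ', hf]
      · funext k
        by_cases hk : (k : ℕ) < b*i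
        · have h3 : (k : ℕ) < 3*(b*m) := by have := k.isLt; omega
          have h4 := congrFun hf ⟨(k : ℕ), h3⟩
          rw [placeW_left _ hs z ξ hk h3, placeW_left _ hs z' ξ' hk h3] at h4
          exact h4
        · have h3 : (k : ℕ) + 2*(b*m) < 3*(b*m) := by have := k.isLt; omega
          have hc1 : ¬ ((k : ℕ) + 2*(b*m) < b*i) := by omega
          have hc2 : ¬ ((k : ℕ) + 2*(b*m) < b*i + 2*(b*m)) := by omega
          have h4 := congrFun hf ⟨(k : ℕ) + 2*(b*m), h3⟩
          rw [placeW_right _ hs z ξ hc1 hc2 h3, placeW_right _ hs z' ξ' hc1 hc2 h3] at h4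
          have e1 := fin_congr ξ (show (k : ℕ) + 2*(b*m) - 2*(b*m) = (k : ℕ) by omega)
            (by have := k.isLt; omega) k.isLt
          have e2 := fin_congr ξ' (show (k : ℕ) + 2*(b*m) - 2*(b*m) = (k : ℕ) by omega)
            (by have := k.isLt; omega) k.isLt
          exact e1.symm.trans (h4.trans e2)
  have hdisjoint : ∀ i, i < m+1 → ∀ j, j < m+1 → i < j →
      ∀ x, x ∈ Fset b m V i → x ∈ Fset b m V j → False := by
    intro i hi j hj hij x hxi hxj
    have hbj : b*j ≤ b*m := Nat.mul_le_mul_left b (by omega)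
    have hbi : b*i ≤ b*m := Nat.mul_le_mul_left b (by omega)
    have hbk : b*(j-i) ≤ b*m := Nat.mul_le_mul_left b (by omega)
    have hsum : b*i + b*(j-i) = b*j := by rw [← Nat.mul_add]; congr 1; omega
    have hv : (fun ℓ : Fin (b*m) => tot x (b*j + (ℓ : ℕ))) ∈ V := by
      have h1 := hxj.1
      have he : (fun i2 : Fin (b*m) =>
          tot (fun ℓ : Fin (2*(b*m)) => tot x (b*j + (ℓ : ℕ))) (i2 : ℕ))
          = (fun ℓ : Fin (b*m) => tot x (b*j + (ℓ : ℕ))) := by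
        funext i2
        have h2 : (i2 : ℕ) < 2*(b*m) := by have := i2.isLt; omega
        rw [tot_lt _ h2]
      rw [he] at h1; exact h1
    have hnv : (fun ℓ : Fin (b*m) => tot x (b*j + (ℓ : ℕ))) ∉ V := by
      have h2 := hxi.2 (j - i) (by omega) (by omega)
      have he : (fun ℓ : Fin (b*m) =>
          tot (fun ℓ2 : Fin (2*(b*m)) => tot x (b*i + (ℓ2 : ℕ))) (b*(j-i) + (ℓ : ℕ)))
          = (fun ℓ : Fin (b*m) => tot x (b*j + (ℓ : ℕ))) := by
        funext ℓ
        have h3 : b*(j-i) + (ℓ : ℕ) < 2*(b*m) := by have := ℓ.isLt; omega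
        rw [tot_lt _ h3]
        show tot x (b*i + (b*(j-i) + (ℓ : ℕ))) = tot x (b*j + (ℓ : ℕ))
        congr 1
        omega
      rw [he] at h2; exact h2
    exact hnv hv
  set GF : ℕ → Finset (Fin (3*(b*m)) → Ω) :=
    fun i => (Set.toFinite (Fset b m V i)).toFinset with hGF
  have hmemGF : ∀ i x, x ∈ GF i ↔ x ∈ Fset b m V i := by
    intro i x
    simp only [hGF, Set.Finite.mem_toFinset]
  have hcardGF : ∀ i, (GF i).card = Nat.card (Fset b m V i) := by
    intro i
    rw [Nat.card_coe_set_eq, Set.ncard_eq_toFinset_card (Fset b m V i) (Set.toFinite _)]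
  have hdisj2 : ∀ i ∈ Finset.range (m+1), ∀ j ∈ Finset.range (m+1), i ≠ j →
      Disjoint (GF i) (GF j) := by
    intro i hi j hj hij
    rw [Finset.disjoint_left]
    intro x hx1 hx2
    rcases Nat.lt_or_ge i j with h | h
    · exact hdisjoint i (Finset.mem_range.mp hi) j (Finset.mem_range.mp hj) h x
        ((hmemGF i x).mp hx1) ((hmemGF j x).mp hx2)
    · have hlt : j < i := by omega
      exact hdisjoint j (Finset.mem_range.mp hj) i (Finset.mem_range.mp hi) hlt x
        ((hmemGF j x).mp hx2) ((hmemGF i x).mp hx1)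
  calc (m+1) * (Nat.card (Zset b m V) * (Fintype.card Ω)^(b*m))
      = ∑ _i ∈ Finset.range (m+1), (Nat.card (Zset b m V) * (Fintype.card Ω)^(b*m)) := by
        rw [Finset.sum_const, Finset.card_range, smul_eq_mul]
    _ ≤ ∑ i ∈ Finset.range (m+1), (GF i).card := by
        apply Finset.sum_le_sum
        intro i hi
        rw [hcardGF i]
        exact key i (by have := Finset.mem_range.mp hi; omega)
    _ = ((Finset.range (m+1)).biUnion GF).card := (Finset.card_biUnion hdisj2).symm
    _ ≤ Fintype.card (Fin (3*(b*m)) → Ω) := Finset.card_le_univ _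
    _ = (Fintype.card Ω)^(3*(b*m)) := by simp

lemma main_lemma (b m : ℕ) (V : Set (Fin (b*m) → Ω)) :
    (m+1) * (Nat.card V * Nat.card {x : Fin (b*m) → Ω | ∀ j' < m, x ∉ covers V (b*j')})
      ≤ (Fintype.card Ω)^(2*(b*m)) := by
  have hc : 0 < (Fintype.card Ω)^(b*m) := pow_pos Fintype.card_pos _
  apply Nat.le_of_mul_le_mul_right _ hc
  calc (m+1) * (Nat.card V *
        Nat.card {x : Fin (b*m) → Ω | ∀ j' < m, x ∉ covers V (b*j')}) * (Fintype.card Ω)^(b*m)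
      = (m+1) * ((Nat.card V *
        Nat.card {x : Fin (b*m) → Ω | ∀ j' < m, x ∉ covers V (b*j')}) * (Fintype.card Ω)^(b*m)) := by
        ring
    _ ≤ (m+1) * (Nat.card (Zset b m V) * (Fintype.card Ω)^(b*m)) :=
        Nat.mul_le_mul_left _ (Nat.mul_le_mul (ML1 b m V) (le_refl _))
    _ ≤ (Fintype.card Ω)^(3*(b*m)) := ML2 b m V
    _ = (Fintype.card Ω)^(2*(b*m)) * (Fintype.card Ω)^(b*m) := by
        rw [← pow_add]; congr 1; ring

lemma per_r {n : ℕ} (A : Set (Fin n → Ω)) (b r : ℕ) (hb : 0 < b) (hr : r < b) (hbn : b ≤ n) :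
    n * (Nat.card A * Nat.card {w : Fin n → Ω | ∀ c, c < n → w ∈ covers A c → c % b ≠ r})
      ≤ b * (Fintype.card Ω)^(2*n) := by
  have hrn : r < n := lt_of_lt_of_le hr hbn
  have hdm := Nat.div_add_mod (n - r + b - 1) b
  have hmod : (n - r + b - 1) % b < b := Nat.mod_lt _ hb
  set mr := (n - r + b - 1) / b with hmrdef
  have hub : n - r ≤ b * mr := by omega
  have hub2 : b * mr < n - r + b := by omega
  set A' : Set (Fin (b*mr) → Ω) :=
    {y | ∃ a ∈ A, ∀ ℓ : Fin (n - r), tot y (ℓ : ℕ) = a ⟨r + (ℓ : ℕ), by have := ℓ.isLt; omega⟩}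
    with hA'def
  set U' : Set (Fin (b*mr) → Ω) := {x | ∀ j' < mr, x ∉ covers A' (b*j')} with hU'def
  have step2 := main_lemma b mr A'
  have step1 : Nat.card A * (Fintype.card Ω)^(b*mr - (n - r))
      ≤ Nat.card A' * (Fintype.card Ω)^r := by
    apply card_aux A A'
      (fun a ξ => padW hub (strunc r (n - r) (by omega) a) ξ)
      (fun a _ => strunc 0 r (by omega) a)
    · intro a ha ξ
      beta_reduce
      refine ⟨a, ha, ?_⟩
      intro ℓ
      have hℓ : (ℓ : ℕ) < b*mr := by have := ℓ.isLt; omega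
      rw [tot_lt _ hℓ, padW_left hub _ ξ ℓ.isLt hℓ, strunc_apply]
    · intro a ha a' ha' ξ ξ' h1 h2
      beta_reduce at h1 h2
      constructor
      · funext i
        by_cases hir : (i : ℕ) < r
        · have h3 := congrFun h2 ⟨(i : ℕ), hir⟩
          rw [strunc_apply, strunc_apply] at h3
          have e1 := fin_congr a (show 0 + (i : ℕ) = (i : ℕ) by omega)
            (by have := i.isLt; omega) i.isLt
          have e2 := fin_congr a' (show 0 + (i : ℕ) = (i : ℕ) by omega)
            (by have := i.isLt; omega) i.isLt
          exact e1.symm.trans (h3.trans e2)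
        · have hc1 : (i : ℕ) - r < n - r := by have := i.isLt; omega
          have hlt : (i : ℕ) - r < b*mr := by omega
          have h3 := congrFun h1 ⟨(i : ℕ) - r, hlt⟩
          rw [padW_left hub _ ξ hc1 hlt, padW_left hub _ ξ' hc1 hlt,
            strunc_apply, strunc_apply] at h3
          have e1 := fin_congr a (show r + ((i : ℕ) - r) = (i : ℕ) by omega)
            (by have := i.isLt; omega) i.isLt
          have e2 := fin_congr a' (show r + ((i : ℕ) - r) = (i : ℕ) by omega)
            (by have := i.isLt; omega) i.isLt
          exact e1.symm.trans (h3.trans e2)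
      · funext k
        have hk2 : (n - r) + (k : ℕ) < b*mr := by have := k.isLt; omega
        have hcnd : ¬ ((n - r) + (k : ℕ) < n - r) := by omega
        have h3 := congrFun h1 ⟨(n - r) + (k : ℕ), hk2⟩
        rw [padW_right hub _ ξ hcnd hk2, padW_right hub _ ξ' hcnd hk2] at h3
        have e1 := fin_congr ξ (show (n - r) + (k : ℕ) - (n - r) = (k : ℕ) by omega)
          (by have := k.isLt; omega) k.isLt
        have e2 := fin_congr ξ' (show (n - r) + (k : ℕ) - (n - r) = (k : ℕ) by omega)
          (by have := k.isLt; omega) k.isLt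
        exact e1.symm.trans (h3.trans e2)
  have hgoodsub : ∀ w : Fin n → Ω, (∀ c, c < n → w ∈ covers A c → c % b ≠ r) →
      ∀ ξ : Fin (b*mr - (n - r)) → Ω,
        padW hub (strunc 0 (n - r) (by omega) w) ξ ∈ U' := by
    intro w hw ξ j' hj' hcov
    obtain ⟨y, hyA', hcov2⟩ := hcov
    obtain ⟨a, haA, hya⟩ := hyA'
    have hbj1 : b*(j'+1) ≤ b*mr := Nat.mul_le_mul_left b (by omega)
    have hbj2 : b*(j'+1) = b*j' + b := by ring
    have hbjnr : b*j' < n - r := by omega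
    have hjlt : b*j' + r < n := by omega
    refine hw (b*j' + r) hjlt ⟨a, haA, ?_⟩
      (by rw [Nat.mul_add_mod]; exact Nat.mod_eq_of_lt hr)
    intro i hi
    have hinr : (i : ℕ) < n - r := by omega
    have hibj : (i : ℕ) + b*j' < n - r := by omega
    have hibj2 : (i : ℕ) + b*j' < b*mr := by omega
    have hiM : (i : ℕ) < b*mr := by omega
    have e0 := hcov2 ⟨(i : ℕ), hiM⟩ hibj2
    rw [padW_left hub _ ξ hinr hiM, strunc_apply] at e0
    have e1 := fin_congr w (show 0 + (i : ℕ) = (i : ℕ) by omega)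
      (by have := i.isLt; omega) i.isLt
    have e2 := hya ⟨(i : ℕ) + b*j', hibj⟩
    rw [tot_lt _ hibj2] at e2
    have e3 := fin_congr a (show r + ((i : ℕ) + b*j') = (i : ℕ) + (b*j' + r) by omega)
      (by omega) hi
    exact e1.symm.trans (e0.trans (e2.trans e3))
  have step3 : Nat.card {w : Fin n → Ω | ∀ c, c < n → w ∈ covers A c → c % b ≠ r}
        * (Fintype.card Ω)^(b*mr - (n - r))
      ≤ Nat.card U' * (Fintype.card Ω)^r := by
    apply card_aux _ U'
      (fun w ξ => padW hub (strunc 0 (n - r) (by omega) w) ξ)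
      (fun w _ => strunc (n - r) r (by omega) w)
    · intro w hw ξ
      exact hgoodsub w hw ξ
    · intro w hw w' hw' ξ ξ' h1 h2
      beta_reduce at h1 h2
      constructor
      · funext i
        by_cases hir : (i : ℕ) < n - r
        · have hiM : (i : ℕ) < b*mr := by omega
          have h3 := congrFun h1 ⟨(i : ℕ), hiM⟩
          rw [padW_left hub _ ξ hir hiM, padW_left hub _ ξ' hir hiM,
            strunc_apply, strunc_apply] at h3
          have e1 := fin_congr w (show 0 + (i : ℕ) = (i : ℕ) by omega)
            (by have := i.isLt; omega) i.isLt
          have e2 := fin_congr w' (show 0 + (i : ℕ) = (i : ℕ) by omega)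
            (by have := i.isLt; omega) i.isLt
          exact e1.symm.trans (h3.trans e2)
        · have hk : (i : ℕ) - (n - r) < r := by have := i.isLt; omega
          have h3 := congrFun h2 ⟨(i : ℕ) - (n - r), hk⟩
          rw [strunc_apply, strunc_apply] at h3
          have e1 := fin_congr w (show (n - r) + ((i : ℕ) - (n - r)) = (i : ℕ) by omega)
            (by have := i.isLt; omega) i.isLt
          have e2 := fin_congr w' (show (n - r) + ((i : ℕ) - (n - r)) = (i : ℕ) by omega)
            (by have := i.isLt; omega) i.isLt
          exact e1.symm.trans (h3.trans e2)
      · funext k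
        have hk2 : (n - r) + (k : ℕ) < b*mr := by have := k.isLt; omega
        have hcnd : ¬ ((n - r) + (k : ℕ) < n - r) := by omega
        have h3 := congrFun h1 ⟨(n - r) + (k : ℕ), hk2⟩
        rw [padW_right hub _ ξ hcnd hk2, padW_right hub _ ξ' hcnd hk2] at h3
        have e1 := fin_congr ξ (show (n - r) + (k : ℕ) - (n - r) = (k : ℕ) by omega)
          (by have := k.isLt; omega) k.isLt
        have e2 := fin_congr ξ' (show (n - r) + (k : ℕ) - (n - r) = (k : ℕ) by omega)
          (by have := k.isLt; omega) k.isLt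
        exact e1.symm.trans (h3.trans e2)
  -- combine
  have hc0 : 0 < Fintype.card Ω := Fintype.card_pos
  have comb : ((mr+1) * (Nat.card A *
        Nat.card {w : Fin n → Ω | ∀ c, c < n → w ∈ covers A c → c % b ≠ r}))
        * ((Fintype.card Ω)^(b*mr - (n - r)) * (Fintype.card Ω)^(b*mr - (n - r)))
      ≤ (Fintype.card Ω)^(2*n)
        * ((Fintype.card Ω)^(b*mr - (n - r)) * (Fintype.card Ω)^(b*mr - (n - r))) := by
    calc ((mr+1) * (Nat.card A *
          Nat.card {w : Fin n → Ω | ∀ c, c < n → w ∈ covers A c → c % b ≠ r}))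
          * ((Fintype.card Ω)^(b*mr - (n - r)) * (Fintype.card Ω)^(b*mr - (n - r)))
        = (mr+1) * ((Nat.card A * (Fintype.card Ω)^(b*mr - (n - r)))
          * (Nat.card {w : Fin n → Ω | ∀ c, c < n → w ∈ covers A c → c % b ≠ r}
            * (Fintype.card Ω)^(b*mr - (n - r)))) := by ring
      _ ≤ (mr+1) * ((Nat.card A' * (Fintype.card Ω)^r)
          * (Nat.card U' * (Fintype.card Ω)^r)) :=
          Nat.mul_le_mul_left _ (Nat.mul_le_mul step1 step3)
      _ = ((mr+1) * (Nat.card A' * Nat.card U'))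
          * ((Fintype.card Ω)^r * (Fintype.card Ω)^r) := by ring
      _ ≤ (Fintype.card Ω)^(2*(b*mr)) * ((Fintype.card Ω)^r * (Fintype.card Ω)^r) :=
          Nat.mul_le_mul step2 (le_refl _)
      _ = (Fintype.card Ω)^(2*(b*mr) + (r + r)) := by rw [← pow_add, ← pow_add]
      _ = (Fintype.card Ω)^(2*n)
          * ((Fintype.card Ω)^(b*mr - (n - r)) * (Fintype.card Ω)^(b*mr - (n - r))) := by
          rw [← pow_add, ← pow_add]; congr 1; omega
  have main2 : (mr+1) * (Nat.card A *
      Nat.card {w : Fin n → Ω | ∀ c, c < n → w ∈ covers A c → c % b ≠ r})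
      ≤ (Fintype.card Ω)^(2*n) :=
    Nat.le_of_mul_le_mul_right comb
      (Nat.mul_pos (pow_pos hc0 _) (pow_pos hc0 _))
  have hnb : n ≤ b*(mr+1) := by
    have : b*(mr+1) = b*mr + b := by ring
    omega
  calc n * (Nat.card A *
        Nat.card {w : Fin n → Ω | ∀ c, c < n → w ∈ covers A c → c % b ≠ r})
      ≤ (b*(mr+1)) * (Nat.card A *
        Nat.card {w : Fin n → Ω | ∀ c, c < n → w ∈ covers A c → c % b ≠ r}) :=
        Nat.mul_le_mul hnb (le_refl _)
    _ = b * ((mr+1) * (Nat.card A *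
        Nat.card {w : Fin n → Ω | ∀ c, c < n → w ∈ covers A c → c % b ≠ r})) := by ring
    _ ≤ b * (Fintype.card Ω)^(2*n) := Nat.mul_le_mul_left _ main2

lemma card_set_filter {α : Type*} [Fintype α] (p : α → Prop) [DecidablePred p] :
    Nat.card {x : α | p x} = (Finset.univ.filter p).card := by
  rw [Nat.card_eq_fintype_card, ← Set.toFinset_card, Set.toFinset_setOf]

lemma averaging {n : ℕ} (A : Set (Fin n → Ω)) (t : ℕ) (ht : 1 ≤ t) :
    t * Nat.card {w : Fin n → Ω | Nat.card {j : ℕ | j < n ∧ w ∈ covers A j} ≤ t}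
      ≤ ∑ r ∈ Finset.range (2*t),
          Nat.card {w : Fin n → Ω | ∀ c, c < n → w ∈ covers A c → c % (2*t) ≠ r} := by
  classical
  have hpoint : ∀ w : Fin n → Ω, Nat.card {j : ℕ | j < n ∧ w ∈ covers A j} ≤ t →
      t ≤ ((Finset.range (2*t)).filter
        (fun r => ∀ c, c < n → w ∈ covers A c → c % (2*t) ≠ r)).card := by
    intro w hw
    set Cw := (Finset.range n).filter (fun c => w ∈ covers A c) with hCw
    have hCcard : Cw.card ≤ t := by
      have hset : {j : ℕ | j < n ∧ w ∈ covers A j} = ↑Cw := by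
        ext j; simp [hCw]
      rw [hset, Nat.card_coe_set_eq, Set.ncard_coe_finset] at hw
      exact hw
    have hex : ∀ r ∈ (Finset.range (2*t)).filter
        (fun r => ¬ ∀ c, c < n → w ∈ covers A c → c % (2*t) ≠ r),
        ∃ c, (c < n ∧ w ∈ covers A c) ∧ c % (2*t) = r := by
      intro r hr
      rw [Finset.mem_filter] at hr
      push_neg at hr
      obtain ⟨c, h1, h2, h3⟩ := hr.2
      exact ⟨c, ⟨h1, h2⟩, h3⟩
    have hbad : ((Finset.range (2*t)).filter
        (fun r => ¬ ∀ c, c < n → w ∈ covers A c → c % (2*t) ≠ r)).card ≤ Cw.card := by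
      apply Finset.card_le_card_of_injOn
        (fun r => if h : ∃ c, (c < n ∧ w ∈ covers A c) ∧ c % (2*t) = r then h.choose else 0)
      · intro r hr
        beta_reduce
        rw [dif_pos (hex r hr)]
        have hs := (hex r hr).choose_spec
        rw [hCw, Finset.mem_coe, Finset.mem_filter, Finset.mem_range]
        exact ⟨hs.1.1, hs.1.2⟩
      · intro r1 hr1 r2 hr2 heq
        rw [Finset.mem_coe] at hr1 hr2
        beta_reduce at heq
        rw [dif_pos (hex r1 hr1), dif_pos (hex r2 hr2)] at heq
        have e1 := (hex r1 hr1).choose_spec.2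
        have e2 := (hex r2 hr2).choose_spec.2
        rw [← e1, ← e2, heq]
    have htotal := Finset.card_filter_add_card_filter_not
      (s := Finset.range (2*t))
      (p := fun r => ∀ c, c < n → w ∈ covers A c → c % (2*t) ≠ r)
    rw [Finset.card_range] at htotal
    omega
  rw [card_set_filter]
  have hcard1 : ∀ r, Nat.card {w : Fin n → Ω | ∀ c, c < n → w ∈ covers A c → c % (2*t) ≠ r}
      = (Finset.univ.filter
        (fun w : Fin n → Ω => ∀ c, c < n → w ∈ covers A c → c % (2*t) ≠ r)).card :=
    fun r => card_set_filter _
  calc t * (Finset.univ.filter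
        (fun w : Fin n → Ω => Nat.card {j : ℕ | j < n ∧ w ∈ covers A j} ≤ t)).card
      = ∑ _w ∈ Finset.univ.filter
          (fun w : Fin n → Ω => Nat.card {j : ℕ | j < n ∧ w ∈ covers A j} ≤ t), t := by
        rw [Finset.sum_const, smul_eq_mul, mul_comm]
    _ ≤ ∑ w ∈ Finset.univ.filter
          (fun w : Fin n → Ω => Nat.card {j : ℕ | j < n ∧ w ∈ covers A j} ≤ t),
          ((Finset.range (2*t)).filter
            (fun r => ∀ c, c < n → w ∈ covers A c → c % (2*t) ≠ r)).card :=
        Finset.sum_le_sum (fun w hwmem => hpoint w (Finset.mem_filter.mp hwmem).2)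
    _ ≤ ∑ w : Fin n → Ω, ((Finset.range (2*t)).filter
          (fun r => ∀ c, c < n → w ∈ covers A c → c % (2*t) ≠ r)).card := by
        apply Finset.sum_le_sum_of_subset (Finset.filter_subset _ _)
    _ = ∑ w : Fin n → Ω, ∑ r ∈ Finset.range (2*t),
          (if (∀ c, c < n → w ∈ covers A c → c % (2*t) ≠ r) then 1 else 0) := by
        refine Finset.sum_congr rfl (fun w _ => ?_)
        rw [Finset.card_filter]
    _ = ∑ r ∈ Finset.range (2*t), ∑ w : Fin n → Ω,
          (if (∀ c, c < n → w ∈ covers A c → c % (2*t) ≠ r) then 1 else 0) :=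
        Finset.sum_comm
    _ = ∑ r ∈ Finset.range (2*t),
          Nat.card {w : Fin n → Ω | ∀ c, c < n → w ∈ covers A c → c % (2*t) ≠ r} := by
        refine Finset.sum_congr rfl (fun r _ => ?_)
        rw [hcard1 r, Finset.card_filter]

end Stmt15Aux

theorem stmt15 {Ω : Type*} [Fintype Ω] [Nonempty Ω] {n : ℕ} (A : Set (Fin n → Ω))
    (α : ℝ) (hα : meas A = α) (h0 : 0 < α) (h1 : α < 1)
    (t : ℕ) (ht1 : 1 ≤ t) (ht2 : 4 * t ≤ n) :
    meas {w : Fin n → Ω | Nat.card {j : ℕ | j < n ∧ w ∈ covers A j} ≤ t}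
      ≤ 4 * t / (α * n) := by
  classical
  have hb : 0 < 2*t := by omega
  have hbn : 2*t ≤ n := by omega
  have hn : 0 < n := by omega
  have hcΩ : 0 < Fintype.card Ω := Fintype.card_pos
  have havg := Stmt15Aux.averaging A t ht1
  have hper : ∀ r ∈ Finset.range (2*t),
      n * (Nat.card A *
        Nat.card {w : Fin n → Ω | ∀ c, c < n → w ∈ covers A c → c % (2*t) ≠ r})
        ≤ (2*t) * (Fintype.card Ω)^(2*n) :=
    fun r hr => Stmt15Aux.per_r A (2*t) r hb (Finset.mem_range.mp hr) hbn
  have key : n * Nat.card A *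
      Nat.card {w : Fin n → Ω | Nat.card {j : ℕ | j < n ∧ w ∈ covers A j} ≤ t}
      ≤ 4 * t * (Fintype.card Ω)^(2*n) := by
    have h6 : t * (n * Nat.card A *
        Nat.card {w : Fin n → Ω | Nat.card {j : ℕ | j < n ∧ w ∈ covers A j} ≤ t})
        ≤ t * (4 * t * (Fintype.card Ω)^(2*n)) := by
      calc t * (n * Nat.card A *
            Nat.card {w : Fin n → Ω | Nat.card {j : ℕ | j < n ∧ w ∈ covers A j} ≤ t})
          = n * Nat.card A * (t *
            Nat.card {w : Fin n → Ω | Nat.card {j : ℕ | j < n ∧ w ∈ covers A j} ≤ t}) := by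
            ring
        _ ≤ n * Nat.card A * ∑ r ∈ Finset.range (2*t),
            Nat.card {w : Fin n → Ω | ∀ c, c < n → w ∈ covers A c → c % (2*t) ≠ r} :=
            Nat.mul_le_mul_left _ havg
        _ = ∑ r ∈ Finset.range (2*t), n * (Nat.card A *
            Nat.card {w : Fin n → Ω | ∀ c, c < n → w ∈ covers A c → c % (2*t) ≠ r}) := by
            rw [Finset.mul_sum]
            exact Finset.sum_congr rfl (fun r _ => by ring)
        _ ≤ ∑ _r ∈ Finset.range (2*t), (2*t) * (Fintype.card Ω)^(2*n) :=
            Finset.sum_le_sum hper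
        _ = (2*t) * ((2*t) * (Fintype.card Ω)^(2*n)) := by
            rw [Finset.sum_const, Finset.card_range, smul_eq_mul]
        _ = t * (4 * t * (Fintype.card Ω)^(2*n)) := by ring
    exact Nat.le_of_mul_le_mul_left h6 (by omega)
  have hA1 : 1 ≤ Nat.card A := by
    rcases Nat.eq_zero_or_pos (Nat.card A) with h | h
    · exfalso
      rw [← hα] at h0
      rw [meas, h] at h0
      simp at h0
    · exact h
  have hαval : α = (Nat.card A : ℝ) / (Fintype.card Ω : ℝ)^n := by rw [← hα]; rfl
  simp only [meas]
  have hcn : (0:ℝ) < (Fintype.card Ω : ℝ)^n := by positivity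
  have hαn : (0:ℝ) < α * n := by
    apply mul_pos h0
    exact_mod_cast hn
  rw [div_le_div_iff₀ hcn hαn, hαval]
  have keyR : (n : ℝ) * (Nat.card A : ℝ) *
      (Nat.card {w : Fin n → Ω | Nat.card {j : ℕ | j < n ∧ w ∈ covers A j} ≤ t} : ℝ)
      ≤ 4 * t * ((Fintype.card Ω : ℝ))^(2*n) := by exact_mod_cast key
  have hpow : ((Fintype.card Ω : ℝ))^(2*n)
      = ((Fintype.card Ω : ℝ))^n * ((Fintype.card Ω : ℝ))^n := by
    rw [← pow_add]; congr 1; omega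
  rw [hpow] at keyR
  have hre : (Nat.card {w : Fin n → Ω | Nat.card {j : ℕ | j < n ∧ w ∈ covers A j} ≤ t} : ℝ)
      * ((Nat.card A : ℝ) / (Fintype.card Ω : ℝ)^n * n)
      = ((n : ℝ) * (Nat.card A : ℝ) *
        (Nat.card {w : Fin n → Ω | Nat.card {j : ℕ | j < n ∧ w ∈ covers A j} ≤ t} : ℝ))
        / (Fintype.card Ω : ℝ)^n := by
    field_simp
  rw [hre, div_le_iff₀ hcn]
  calc (n : ℝ) * (Nat.card A : ℝ) *
        (Nat.card {w : Fin n → Ω | Nat.card {j : ℕ | j < n ∧ w ∈ covers A j} ≤ t} : ℝ)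
      ≤ 4 * t * ((Fintype.card Ω : ℝ)^n * (Fintype.card Ω : ℝ)^n) := keyR
    _ = 4 * ↑t * (Fintype.card Ω : ℝ)^n * (Fintype.card Ω : ℝ)^n := by ring
end

section
/- Let A ⊆ Ω^n with μ(A) = α ≥ 1/n. Then the set of w ∈ Ω^n that lie in at least αn/8 of the sets s^j(A) × Ω^j (j = 0,…,n−1) has measure at least 1/2. -/
open Finset
open scoped Classical
set_option linter.unusedSectionVars false

section MainAux
variable {Ω : Type*} [Fintype Ω] [Nonempty Ω] {n : ℕ}

noncomputable def extw {m : ℕ} (z : Fin m → Ω) : ℕ → Ω :=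
  fun i => if h : i < m then z ⟨i, h⟩ else Classical.arbitrary Ω

lemma extw_lt {m : ℕ} (z : Fin m → Ω) {i : ℕ} (h : i < m) : extw z i = z ⟨i, h⟩ := dif_pos h

def win (z : ℕ → Ω) (p n : ℕ) : Fin n → Ω := fun i => z (p + (i : ℕ))

noncomputable def fcnt (A : Set (Fin n → Ω)) (w : Fin n → Ω) : ℕ :=
  ((range n).filter (fun j => w ∈ covers A j)).card

noncomputable def UT (A : Set (Fin n → Ω)) (t : ℕ) : Set (Fin n → Ω) := {u | fcnt A u ≤ t}

noncomputable def ZT (A : Set (Fin n → Ω)) (t : ℕ) : Set (Fin (2*n) → Ω) :=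
  {z | win (extw z) 0 n ∈ A ∧ ((Icc 1 n).filter (fun p => win (extw z) p n ∈ A)).card ≤ t}

def catw (a u : Fin n → Ω) : Fin (2*n) → Ω :=
  fun i => if h : (i : ℕ) < n then a ⟨i, h⟩ else u ⟨(i:ℕ) - n, by have := i.isLt; omega⟩

lemma extw_catw_left (a u : Fin n → Ω) {i : ℕ} (h : i < n) :
    extw (catw a u) i = a ⟨i, h⟩ := by
  rw [extw_lt (catw a u) (show i < 2*n by omega)]
  simp [catw, h]

lemma extw_catw_right (a u : Fin n → Ω) {i : ℕ} (h1 : n ≤ i) (h2 : i < 2*n) :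
    extw (catw a u) i = u ⟨i - n, by omega⟩ := by
  rw [extw_lt (catw a u) h2]
  simp [catw, Nat.not_lt.2 h1]

lemma catw_injOn (A : Set (Fin n → Ω)) (t : ℕ) :
    Set.InjOn (fun au : (Fin n → Ω) × (Fin n → Ω) => catw au.1 au.2) (A ×ˢ UT A t) := by
  rintro ⟨a, u⟩ - ⟨a', u'⟩ - h
  simp only [Prod.mk.injEq] at *
  constructor
  · funext i
    have : extw (catw a u) (i : ℕ) = extw (catw a' u') (i : ℕ) := by rw [h]
    rwa [extw_catw_left _ _ i.isLt, extw_catw_left _ _ i.isLt] at this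
  · funext i
    have hi : (i : ℕ) + n < 2*n := by have := i.isLt; omega
    have : extw (catw a u) ((i : ℕ) + n) = extw (catw a' u') ((i : ℕ) + n) := by rw [h]
    rw [extw_catw_right _ _ (by omega) hi, extw_catw_right _ _ (by omega) hi] at this
    simpa using this

lemma catw_mapsTo (A : Set (Fin n → Ω)) (t : ℕ) :
    Set.MapsTo (fun au : (Fin n → Ω) × (Fin n → Ω) => catw au.1 au.2) (A ×ˢ UT A t)
      (ZT A t) := by
  rintro ⟨a, u⟩ ⟨hA, hU⟩
  constructor
  · have : win (extw (catw a u)) 0 n = a := by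
      funext i
      rw [win, show 0 + (i:ℕ) = (i:ℕ) by omega, extw_catw_left _ _ i.isLt, Fin.eta]
    rwa [this]
  · refine le_trans (Finset.card_le_card_of_injOn (fun p => n - p) ?_ ?_) hU
    · intro p hp
      simp only [Finset.mem_coe, mem_filter, mem_Icc] at hp
      obtain ⟨⟨hp1, hpn⟩, hpA⟩ := hp
      simp only [Finset.mem_coe, mem_filter, mem_range]
      refine ⟨by omega, ?_⟩
      refine ⟨win (extw (catw a u)) p n, hpA, ?_⟩
      intro i h
      have hip : (i : ℕ) < p := by omega
      rw [win]
      rw [show p + ((i:ℕ) + (n - p)) = (i:ℕ) + n by omega]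
      rw [extw_catw_right _ _ (by omega) (by have := i.isLt; omega)]
      congr 1
      apply Fin.ext
      simp
    · intro p hp p' hp' hpp
      simp only [coe_filter, Set.mem_setOf_eq, mem_Icc] at hp hp'
      have : n - p = n - p' := hpp
      omega


noncomputable def ZP (A : Set (Fin n → Ω)) (t p : ℕ) : Set (Fin (3*n) → Ω) :=
  {z | win (extw z) p n ∈ A ∧ ((Icc (p+1) (p+n)).filter (fun k => win (extw z) k n ∈ A)).card ≤ t}

def shiftSplit (p : ℕ) (hp : p ≤ n) : (Fin (3*n) → Ω) ≃ (Fin (2*n) → Ω) × (Fin n → Ω) where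
  toFun z := (fun i => z ⟨p + (i:ℕ), by have := i.isLt; omega⟩,
              fun i => if h : (i:ℕ) < p then z ⟨(i:ℕ), by omega⟩
                else z ⟨(i:ℕ) + 2*n, by have := i.isLt; omega⟩)
  invFun w := fun j => if h : (j:ℕ) < p then w.2 ⟨(j:ℕ), by omega⟩
    else if h2 : (j:ℕ) < p + 2*n then w.1 ⟨(j:ℕ) - p, by omega⟩
    else w.2 ⟨(j:ℕ) - 2*n, by have := j.isLt; omega⟩
  left_inv z := by
    funext j
    by_cases h : (j:ℕ) < p
    · simp only [dif_pos h]
    · by_cases h2 : (j:ℕ) < p + 2*n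
      · simp only [dif_neg h, dif_pos h2]
        exact congrArg z (Fin.ext (by simp; omega))
      · have h3 : ¬ ((j:ℕ) - 2*n < p) := by omega
        simp only [dif_neg h, dif_neg h2, dif_neg h3]
        exact congrArg z (Fin.ext (by simp; omega))
  right_inv w := by
    ext i
    · have h1 : ¬ (p + (i:ℕ) < p) := by omega
      have h2 : p + (i:ℕ) < p + 2*n := by have := i.isLt; omega
      simp only [dif_neg h1, dif_pos h2]
      exact congrArg w.1 (Fin.ext (by simp))
    · by_cases h : (i:ℕ) < p
      · simp only [dif_pos h]
      · have h2 : ¬ ((i:ℕ) + 2*n < p + 2*n) := by omega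
        have h3 : ¬ ((i:ℕ) + 2*n < p) := by omega
        simp only [dif_neg h, dif_neg h3, dif_neg h2]
        exact congrArg w.2 (Fin.ext (by simp))
      
lemma win_shiftSplit (p : ℕ) (hp : p ≤ n) (z : Fin (3*n) → Ω) {k : ℕ} (hk : k ≤ n) :
    win (extw ((shiftSplit p hp z).1 : Fin (2*n) → Ω)) k n = win (extw z) (p + k) n := by
  funext i
  have hi := i.isLt
  rw [win, win, extw_lt _ (show k + (i:ℕ) < 2*n by omega),
    extw_lt _ (show p + k + (i:ℕ) < 3*n by omega)]
  simp only [shiftSplit, Equiv.coe_fn_mk]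
  exact congrArg z (Fin.ext (by simp; omega))

lemma mem_ZP_iff (A : Set (Fin n → Ω)) (t : ℕ) {p : ℕ} (hp : p ≤ n) (z : Fin (3*n) → Ω) :
    z ∈ ZP A t p ↔ (shiftSplit p hp z).1 ∈ ZT A t := by
  have hwin0 : win (extw ((shiftSplit p hp z).1)) 0 n = win (extw z) p n := by
    rw [win_shiftSplit p hp z (by omega)]; norm_num
  have hfilter : (Icc 1 n).filter (fun k => win (extw ((shiftSplit p hp z).1)) k n ∈ A)
      = Finset.image (fun k => k - p) ((Icc (p+1) (p+n)).filter
          (fun k => win (extw z) k n ∈ A)) := by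
    ext k
    simp only [mem_filter, mem_Icc, Finset.mem_image]
    constructor
    · rintro ⟨⟨h1, h2⟩, hA⟩
      exact ⟨p + k, ⟨⟨by omega, by omega⟩, by rwa [win_shiftSplit p hp z h2] at hA⟩, by omega⟩
    · rintro ⟨k', ⟨⟨h1, h2⟩, hA⟩, rfl⟩
      refine ⟨⟨by omega, by omega⟩, ?_⟩
      rw [win_shiftSplit p hp z (by omega), show p + (k' - p) = k' by omega]
      exact hA
  have hinj : Set.InjOn (fun k => k - p)
      ((Icc (p+1) (p+n)).filter (fun k => win (extw z) k n ∈ A)) := by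
    intro x hx y hy hxy
    simp only [coe_filter, Set.mem_setOf_eq, mem_Icc] at hx hy
    simp only at hxy
    omega
  constructor
  · rintro ⟨h1, h2⟩
    exact ⟨by rwa [hwin0], by rw [hfilter, Finset.card_image_of_injOn hinj]; exact h2⟩
  · rintro ⟨h1, h2⟩
    rw [hwin0] at h1
    rw [hfilter, Finset.card_image_of_injOn hinj] at h2
    exact ⟨h1, h2⟩

lemma card_ZP (A : Set (Fin n → Ω)) (t : ℕ) {p : ℕ} (hp : p ≤ n) :
    Nat.card (ZP A t p) = Nat.card (ZT A t) * (Fintype.card Ω)^n := by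
  have e1 : (ZP A t p) ≃ {pr : (Fin (2*n) → Ω) × (Fin n → Ω) // pr.1 ∈ ZT A t} :=
    (shiftSplit p hp).subtypeEquiv (fun z => mem_ZP_iff A t hp z)
  have e2 : {pr : (Fin (2*n) → Ω) × (Fin n → Ω) // pr.1 ∈ ZT A t}
      ≃ (ZT A t) × (Fin n → Ω) := Equiv.prodSubtypeFstEquivSubtypeProd
  rw [Nat.card_congr (e1.trans e2), Nat.card_prod, Nat.card_eq_fintype_card (α := Fin n → Ω),
    Fintype.card_fun, Fintype.card_fin]


lemma card_filter_ZP (A : Set (Fin n → Ω)) (t : ℕ) (z : Fin (3*n) → Ω) :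
    ((range (n+1)).filter (fun p => z ∈ ZP A t p)).card ≤ t + 1 := by
  set P := (range (n+1)).filter (fun p => z ∈ ZP A t p) with hP
  rcases P.eq_empty_or_nonempty with h | h
  · simp [h]
  · set p0 := P.min' h with hp0
    have hp0P : p0 ∈ P := P.min'_mem h
    have hp0Z : z ∈ ZP A t p0 := (mem_filter.1 hp0P).2
    have hsub : P ⊆ insert p0 ((Icc (p0+1) (p0+n)).filter (fun k => win (extw z) k n ∈ A)) := by
      intro p hp
      rcases eq_or_ne p p0 with rfl | hne
      · exact Finset.mem_insert_self _ _
      · apply Finset.mem_insert_of_mem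
        have hple : p ≤ n := by
          have := (mem_filter.1 hp).1; simp only [mem_range] at this; omega
        have hge : p0 ≤ p := P.min'_le p hp
        have hzp : z ∈ ZP A t p := (mem_filter.1 hp).2
        exact mem_filter.2 ⟨mem_Icc.2 ⟨by omega, by omega⟩, hzp.1⟩
    calc P.card ≤ _ := Finset.card_le_card hsub
      _ ≤ ((Icc (p0+1) (p0+n)).filter (fun k => win (extw z) k n ∈ A)).card + 1 :=
        Finset.card_insert_le _ _
      _ ≤ t + 1 := by have := hp0Z.2; omega

lemma main_count (A : Set (Fin n → Ω)) (t : ℕ) :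
    Nat.card A * Nat.card (UT A t) * (n+1) ≤ (t+1) * (Fintype.card Ω)^(2*n) := by
  have hq : 0 < Fintype.card Ω := Fintype.card_pos
  -- step 1: |A| * |UT| ≤ |ZT|
  have h1 : Nat.card A * Nat.card (UT A t) ≤ Nat.card (ZT A t) := by
    have himg : ((fun au : (Fin n → Ω) × (Fin n → Ω) => catw au.1 au.2) '' (A ×ˢ UT A t)).ncard
        ≤ (ZT A t).ncard :=
      Set.ncard_le_ncard ((Set.image_subset_iff).2 (catw_mapsTo A t)) (Set.toFinite _)
    rw [Set.ncard_image_of_injOn (catw_injOn A t)] at himg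
    calc Nat.card A * Nat.card (UT A t)
        = Nat.card ((A : Set (Fin n → Ω)) ×ˢ UT A t) := by
          rw [Nat.card_congr (Equiv.Set.prod _ _), Nat.card_prod]
      _ ≤ Nat.card (ZT A t) := by
          rwa [Nat.card_coe_set_eq, Nat.card_coe_set_eq]
  -- step 2: (n+1) * |ZT| * q^n ≤ (t+1) * q^(3n)
  have h2 : (n+1) * (Nat.card (ZT A t) * (Fintype.card Ω)^n) ≤ (t+1) * (Fintype.card Ω)^(3*n) := by
    have hsum : ∑ p ∈ range (n+1), Nat.card (ZP A t p)
        = (n+1) * (Nat.card (ZT A t) * (Fintype.card Ω)^n) := by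
      rw [Finset.sum_congr rfl (fun p hp => card_ZP A t (by
        simp only [mem_range] at hp; omega))]
      simp [mul_comm]
    have hsum2 : ∑ p ∈ range (n+1), Nat.card (ZP A t p) ≤ (t+1) * (Fintype.card Ω)^(3*n) := by
      have heach : ∀ p, Nat.card (ZP A t p)
          = ∑ z : Fin (3*n) → Ω, if z ∈ ZP A t p then 1 else 0 := by
        intro p
        rw [Nat.card_eq_fintype_card, Fintype.card_subtype, Finset.card_filter]
      calc ∑ p ∈ range (n+1), Nat.card (ZP A t p)
          = ∑ p ∈ range (n+1), ∑ z : Fin (3*n) → Ω, if z ∈ ZP A t p then 1 else 0 := by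
            exact Finset.sum_congr rfl (fun p _ => heach p)
        _ = ∑ z : Fin (3*n) → Ω, ∑ p ∈ range (n+1), if z ∈ ZP A t p then 1 else 0 :=
            Finset.sum_comm
        _ ≤ ∑ _z : Fin (3*n) → Ω, (t+1) := by
            refine Finset.sum_le_sum (fun z _ => ?_)
            rw [← Finset.card_filter]
            exact card_filter_ZP A t z
        _ = (t+1) * (Fintype.card Ω)^(3*n) := by
            rw [Finset.sum_const, Finset.card_univ, Fintype.card_fun, Fintype.card_fin,
              smul_eq_mul, mul_comm]
    omega
  -- combine and cancel q^n
  have h3 : (Nat.card A * Nat.card (UT A t) * (n+1)) * (Fintype.card Ω)^n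
      ≤ ((t+1) * (Fintype.card Ω)^(2*n)) * (Fintype.card Ω)^n := by
    calc (Nat.card A * Nat.card (UT A t) * (n+1)) * (Fintype.card Ω)^n
        ≤ (Nat.card (ZT A t) * (n+1)) * (Fintype.card Ω)^n := by
          exact Nat.mul_le_mul_right _ (Nat.mul_le_mul_right _ h1)
      _ = (n+1) * (Nat.card (ZT A t) * (Fintype.card Ω)^n) := by ring
      _ ≤ (t+1) * (Fintype.card Ω)^(3*n) := h2
      _ = ((t+1) * (Fintype.card Ω)^(2*n)) * (Fintype.card Ω)^n := by
          rw [show 3*n = 2*n + n by ring, pow_add]; ring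
  exact Nat.le_of_mul_le_mul_right h3 (pow_pos hq n)

end MainAux


section Final
variable {Ω : Type*} [Fintype Ω] [Nonempty Ω] {n : ℕ}

lemma fcnt_eq (A : Set (Fin n → Ω)) (w : Fin n → Ω) :
    Nat.card {j : ℕ | j < n ∧ w ∈ covers A j} = fcnt A w := by
  rw [Nat.card_coe_set_eq,
    show {j : ℕ | j < n ∧ w ∈ covers A j} = ↑((range n).filter fun j => w ∈ covers A j) by
      ext j; simp [mem_filter, mem_range],
    Set.ncard_coe_finset]
  rfl

end Final

set_option maxHeartbeats 1000000 in
theorem stmt16 {Ω : Type*} [Fintype Ω] [Nonempty Ω] {n : ℕ} (hn : 1 ≤ n)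
    (A : Set (Fin n → Ω)) (α : ℝ) (hα : meas A = α)
    (hα1 : 1 / (n : ℝ) ≤ α) (hα8 : 8 ≤ α * n) :
    meas {w : Fin n → Ω |
        α * n / 8 ≤ (Nat.card {j : ℕ | j < n ∧ w ∈ covers A j} : ℝ)}
      ≥ 1 / 2 := by
  have hq : 0 < Fintype.card Ω := Fintype.card_pos
  have hqn : (0:ℝ) < (Fintype.card Ω : ℝ)^n := by positivity
  have hn0 : (0:ℝ) < n := by exact_mod_cast hn
  have hα0 : 0 < α := by nlinarith
  set x := α * n / 8 with hx
  have hx1 : 1 ≤ x := by rw [hx]; linarith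
  have hceil : 1 ≤ ⌈x⌉₊ := Nat.one_le_ceil_iff.2 (by linarith)
  set t : ℕ := ⌈x⌉₊ - 1 with ht
  have htn : t + 1 = ⌈x⌉₊ := by omega
  set T := {w : Fin n → Ω | x ≤ (Nat.card {j : ℕ | j < n ∧ w ∈ covers A j} : ℝ)} with hT
  have hTc : Tᶜ ⊆ UT A t := by
    intro w hw
    simp only [hT, Set.mem_compl_iff, Set.mem_setOf_eq, not_le] at hw
    rw [fcnt_eq] at hw
    have : fcnt A w < ⌈x⌉₊ := Nat.lt_ceil.2 hw
    exact Nat.lt_succ_iff.1 (by omega)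
  -- counting
  have hmc := main_count A t
  have hCle : Nat.card ↥(Tᶜ) ≤ Nat.card (UT A t) := by
    rw [Nat.card_coe_set_eq, Nat.card_coe_set_eq]
    exact Set.ncard_le_ncard hTc (Set.toFinite _)
  have hkey : Nat.card A * Nat.card ↥(Tᶜ) * (n+1) ≤ (t+1) * (Fintype.card Ω)^(2*n) :=
    le_trans (by exact Nat.mul_le_mul_right _ (Nat.mul_le_mul_left _ hCle)) hmc
  -- cast to ℝ
  have hkeyR : (Nat.card A : ℝ) * (Nat.card ↥(Tᶜ) : ℝ) * ((n:ℝ)+1)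
      ≤ ((t:ℝ)+1) * ((Fintype.card Ω : ℝ))^(2*n) := by exact_mod_cast hkey
  have hA : (Nat.card A : ℝ) = α * (Fintype.card Ω : ℝ)^n := by
    rw [meas] at hα
    exact (div_eq_iff hqn.ne').1 hα
  have ht1 : ((t:ℝ)+1) ≤ x + 1 := by
    have h0 : ((t:ℝ)+1) = (⌈x⌉₊ : ℝ) := by exact_mod_cast htn
    rw [h0]
    exact le_of_lt (Nat.ceil_lt_add_one (by linarith))
  have hq2n : ((Fintype.card Ω : ℝ))^(2*n) = (Fintype.card Ω : ℝ)^n * (Fintype.card Ω : ℝ)^n := by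
    rw [two_mul, pow_add]
  -- derive bound on |Tᶜ|
  have hCbound : (Nat.card ↥(Tᶜ) : ℝ) ≤ (Fintype.card Ω : ℝ)^n / 4 := by
    have h1 : α * (Fintype.card Ω : ℝ)^n * (Nat.card ↥(Tᶜ) : ℝ) * ((n:ℝ)+1)
        ≤ (x + 1) * ((Fintype.card Ω : ℝ)^n * (Fintype.card Ω : ℝ)^n) := by
      rw [← hA, ← hq2n]
      calc (Nat.card A : ℝ) * (Nat.card ↥(Tᶜ) : ℝ) * ((n:ℝ)+1)
          ≤ ((t:ℝ)+1) * ((Fintype.card Ω : ℝ))^(2*n) := hkeyR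
        _ ≤ (x + 1) * ((Fintype.card Ω : ℝ))^(2*n) := by
            apply mul_le_mul_of_nonneg_right ht1 (by positivity)
    have hx2 : x + 1 ≤ α * n / 4 := by rw [hx]; linarith
    have h2 : α * (Fintype.card Ω : ℝ)^n * (Nat.card ↥(Tᶜ) : ℝ) * ((n:ℝ)+1)
        ≤ (α * n / 4) * ((Fintype.card Ω : ℝ)^n * (Fintype.card Ω : ℝ)^n) := by
      refine le_trans h1 (mul_le_mul_of_nonneg_right hx2 (by positivity))
    -- cancel α * q^n
    have h3 : (Nat.card ↥(Tᶜ) : ℝ) * ((n:ℝ)+1) ≤ (n / 4) * (Fintype.card Ω : ℝ)^n := by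
      have hpos : 0 < α * (Fintype.card Ω : ℝ)^n := by positivity
      nlinarith [h2, hpos]
    have h4 : (n:ℝ) / 4 * (Fintype.card Ω : ℝ)^n ≤ ((n:ℝ)+1) / 4 * (Fintype.card Ω : ℝ)^n := by
      apply mul_le_mul_of_nonneg_right _ (by positivity)
      linarith
    nlinarith [h3, h4]
  -- complement count
  have hcompl : (Nat.card ↥T : ℝ) + (Nat.card ↥(Tᶜ) : ℝ) = (Fintype.card Ω : ℝ)^n := by
    have h5 : T.ncard + Tᶜ.ncard = (Fintype.card Ω)^n := by
      rw [Set.ncard_add_ncard_compl, Nat.card_eq_fintype_card, Fintype.card_fun,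
        Fintype.card_fin]
    rw [Nat.card_coe_set_eq, Nat.card_coe_set_eq]
    exact_mod_cast h5
  rw [ge_iff_le, meas, le_div_iff₀ hqn]
  linarith [hCbound, hcompl]
end
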